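/- There is no smooth complete fan Σ' in ℤ^4 that is Fano together with a cone τ of Σ' of dimension at least 2 such that Σ_Y is the star subdivision of Σ' at τ. (Equivalently: the toric Fano 4-fold Y associated to Σ_Y does not admit any equivariant blow-down to a nonsingular toric Fano 4-fold.) -/

import Mathlib

/-! ## Basic setup: cones and smooth complete fans in `ℤ^n` with ambient space `ℚ^n` -/

/-- The ambient rational vector space `ℚ^n`. -/
abbrev Vec (n : ℕ) := Fin n → ℚ

/-- The lattice `ℤ^n`. -/
abbrev LVec (n : ℕ) := Fin n → ℤ

/-- The natural inclusion `ℤ^n → ℚ^n`. -/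
def toQ {n : ℕ} (v : LVec n) : Vec n := fun i => (v i : ℚ)

/-- The cone generated by a set `S ⊆ ℚ^n`: all nonnegative rational linear
combinations of elements of `S`. -/
def coneGen {n : ℕ} (S : Set (Vec n)) : Set (Vec n) :=
  {x | ∃ (T : Finset (Vec n)) (c : Vec n → ℚ),
    ↑T ⊆ S ∧ (∀ s, 0 ≤ c s) ∧ x = ∑ s ∈ T, c s • s}

/-- `G` is a face of the cone `σ`: it is cut out on `σ` by a linear form
which is nonnegative on `σ`. -/
def IsFaceOf {n : ℕ} (G σ : Set (Vec n)) : Prop :=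
  ∃ u : Vec n →ₗ[ℚ] ℚ, (∀ x ∈ σ, 0 ≤ u x) ∧ G = {x ∈ σ | u x = 0}

/-- A smooth complete fan in `ℤ^n`: a finite collection of cones in `ℚ^n`, each
generated by (the images of) a subset of some `ℤ`-basis of `ℤ^n`, closed under
taking faces, such that the intersection of two cones is a face of each, and whose
union is all of `ℚ^n`. -/
structure IsSmoothCompleteFan {n : ℕ} (F : Set (Set (Vec n))) : Prop where
  finite : F.Finite
  smooth : ∀ σ ∈ F, ∃ (b : Module.Basis (Fin n) ℤ (LVec n)) (I : Finset (Fin n)),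
    σ = coneGen (toQ '' (⇑b '' ↑I))
  faces : ∀ σ ∈ F, ∀ G, IsFaceOf G σ → G ∈ F
  inter : ∀ σ ∈ F, ∀ τ ∈ F, IsFaceOf (σ ∩ τ) σ ∧ IsFaceOf (σ ∩ τ) τ
  covers : ⋃₀ F = Set.univ

/-- A primitive lattice vector. -/
def IsPrimitive {n : ℕ} (v : LVec n) : Prop :=
  v ≠ 0 ∧ ∀ (k : ℤ) (w : LVec n), v = k • w → IsUnit k

/-- `G(Σ)`: the set of primitive lattice generators of the rays of the fan. -/
def gens {n : ℕ} (F : Set (Set (Vec n))) : Set (LVec n) :=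
  {v | IsPrimitive v ∧ coneGen {toQ v} ∈ F}

/-- A primitive collection of the fan `F`: a set `P` of ray generators such that
`P` does not generate a cone of `F`, but every proper subset obtained by removing
one element does. -/
def IsPrimCol {n : ℕ} (F : Set (Set (Vec n))) (P : Finset (LVec n)) : Prop :=
  ↑P ⊆ gens F ∧ coneGen (toQ '' ↑P) ∉ F ∧
    ∀ x ∈ P, coneGen (toQ '' ↑(P.erase x)) ∈ F

/-- `HasPrimRel F P Y a` : the sum of the elements of `P` lies in the relative
interior of the cone of `F` generated by `Y`, with (positive integral) coordinates
`a y` on the generators `y ∈ Y`; i.e. the primitive relation of `P` is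
`∑_{x ∈ P} x = ∑_{y ∈ Y} a y • y`. -/
def HasPrimRel {n : ℕ} (F : Set (Set (Vec n))) (P Y : Finset (LVec n))
    (a : LVec n → ℤ) : Prop :=
  ↑Y ⊆ gens F ∧ coneGen (toQ '' ↑Y) ∈ F ∧ (∀ y ∈ Y, 0 < a y) ∧
    ∑ x ∈ P, x = ∑ y ∈ Y, a y • y

/-- The degree of a primitive collection `P` with primitive relation data `(Y, a)`:
`deg P = |P| - ∑ a_y`. -/
def degOf {n : ℕ} (P Y : Finset (LVec n)) (a : LVec n → ℤ) : ℤ :=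
  (P.card : ℤ) - ∑ y ∈ Y, a y

/-- A fan is Fano if every primitive collection has strictly positive degree
(Batyrev's criterion). -/
def IsFano {n : ℕ} (F : Set (Set (Vec n))) : Prop :=
  ∀ P Y a, IsPrimCol F P → HasPrimRel F P Y a → 0 < degOf P Y a

/-- The star subdivision of the fan `F` at the cone generated by `T`, with new ray
generated by `x = ∑_{t ∈ T} t`: its cones are the cones of `F` not containing the
cone of `T`, together with the cones generated by `{x} ∪ A` where `A` runs over the
generator sets of those faces, not containing the cone of `T`, of the cones of `F`
containing the cone of `T`. -/
def starSubdiv {n : ℕ} (F : Set (Set (Vec n))) (T : Finset (LVec n)) :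
    Set (Set (Vec n)) :=
  {σ ∈ F | ¬ coneGen (toQ '' ↑T) ⊆ σ} ∪
  {ρ | ∃ A : Finset (LVec n), ↑A ⊆ gens F ∧
      (∃ σ ∈ F, coneGen (toQ '' ↑T) ⊆ σ ∧ IsFaceOf (coneGen (toQ '' (↑A : Set (LVec n)))) σ) ∧
      ¬ coneGen (toQ '' ↑T) ⊆ coneGen (toQ '' (↑A : Set (LVec n))) ∧
      ρ = coneGen (toQ '' ↑(insert (∑ t ∈ T, t) A : Finset (LVec n)))}

/-- `F'` is obtained from `F` by a star subdivision at a cone of `F` of dimension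
at least `2` (equivalently, the associated toric morphism is a blow-up along a
smooth invariant center). -/
def IsBlowup {n : ℕ} (F' F : Set (Set (Vec n))) : Prop :=
  ∃ T : Finset (LVec n), ↑T ⊆ gens F ∧ 2 ≤ T.card ∧
    coneGen (toQ '' ↑T) ∈ F ∧ F' = starSubdiv F T

/-- The fan `F'` refines the fan `F`: every cone of `F'` is contained in a cone
of `F`. -/
def Refines {n : ℕ} (F' F : Set (Set (Vec n))) : Prop :=
  ∀ σ' ∈ F', ∃ σ ∈ F, σ' ⊆ σ


/-! ## The explicit construction in `ℤ^4` -/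

/-- `e₁`, first standard basis vector of `ℤ^4`. -/
def e1 : LVec 4 := ![1, 0, 0, 0]
/-- `e₂`. -/
def e2 : LVec 4 := ![0, 1, 0, 0]
/-- `e₃`. -/
def e3 : LVec 4 := ![0, 0, 1, 0]
/-- `e₄`. -/
def e4 : LVec 4 := ![0, 0, 0, 1]
/-- `e₀ = -e₁ - e₂ - e₃ - e₄`. -/
def e0 : LVec 4 := ![-1, -1, -1, -1]
/-- `e₅ = e₁ + e₂ + e₃`. -/
def e5 : LVec 4 := ![1, 1, 1, 0]
/-- `e₆ = e₂ + e₃ + e₄`. -/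
def e6 : LVec 4 := ![0, 1, 1, 1]
/-- `e₇ = e₄ + e₅`. -/
def e7 : LVec 4 := ![1, 1, 1, 1]

/-- The fan of `ℙ^4`: its cones are generated by the proper subsets of
`{e₀, e₁, e₂, e₃, e₄}`. -/
def SigmaP4 : Set (Set (Vec 4)) :=
  {σ | ∃ S : Finset (LVec 4), S ⊂ ({e0, e1, e2, e3, e4} : Finset (LVec 4)) ∧
    σ = coneGen (toQ '' ↑S)}

/-- `Σ_X`: the fan of `ℙ^4` blown up along the line `V(⟨e₁,e₂,e₃⟩)`, i.e. the star
subdivision of `Σ_{ℙ^4}` at the cone generated by `{e₁,e₂,e₃}`, with new ray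
`e₅ = e₁ + e₂ + e₃`. -/
def SigmaX : Set (Set (Vec 4)) := starSubdiv SigmaP4 {e1, e2, e3}

/-- `Σ_W`: the star subdivision of `Σ_X` at the cone generated by `{e₂,e₃,e₄}`,
with new ray `e₆ = e₂ + e₃ + e₄`. -/
def SigmaW : Set (Set (Vec 4)) := starSubdiv SigmaX {e2, e3, e4}

/-- `Σ_Y`: the star subdivision of `Σ_W` at the cone generated by `{e₄,e₅}`,
with new ray `e₇ = e₄ + e₅`. -/
def SigmaY : Set (Set (Vec 4)) := starSubdiv SigmaW {e4, e5}

/-! ### Machinery -/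

open Finset in
theorem toQ_injective {n : ℕ} : Function.Injective (toQ (n := n)) := by
  intro a b h
  funext i
  have := congrFun h i
  simpa [toQ] using this

@[simp] theorem toQ_apply {n : ℕ} (v : LVec n) (i : Fin n) : toQ v i = (v i : ℚ) := rfl

theorem toQ_eq_zero {n : ℕ} {v : LVec n} (h : toQ v = 0) : v = 0 := by
  funext i
  have := congrFun h i
  simpa [toQ] using this

theorem toQ_sum {n : ℕ} (T : Finset (LVec n)) : toQ (∑ t ∈ T, t) = ∑ t ∈ T, toQ t := by
  funext i
  simp [toQ, Finset.sum_apply]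

theorem toQ_sum_f {n : ℕ} {α : Type*} (T : Finset α) (f : α → LVec n) :
    toQ (∑ t ∈ T, f t) = ∑ t ∈ T, toQ (f t) := by
  funext i
  simp [toQ, Finset.sum_apply]

/-- An explicit right inverse for `toQ` (on its image). -/
def invQ {n : ℕ} (v : Vec n) : LVec n := fun i => (v i).num

@[simp] theorem invQ_toQ {n : ℕ} (s : LVec n) : invQ (toQ s) = s := by
  funext i; simp [invQ, toQ]

theorem mem_coneGen_iff {n : ℕ} (S : Finset (LVec n)) (x : Vec n) :
    x ∈ coneGen (toQ '' ↑S) ↔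
      ∃ c : LVec n → ℚ, (∀ s, 0 ≤ c s) ∧ x = ∑ s ∈ S, c s • toQ s := by
  constructor
  · rintro ⟨T, c, hT, hc, rfl⟩
    have hsub : T ⊆ S.image toQ := by
      intro t ht
      have := hT ht
      rw [Finset.mem_image]
      obtain ⟨a, ha, rfl⟩ := this
      exact ⟨a, Finset.mem_coe.mp ha, rfl⟩
    refine ⟨fun s => if toQ s ∈ T then c (toQ s) else 0, fun s => by dsimp only; split <;> [exact hc _; exact le_refl 0], ?_⟩
    have h1 : ∑ t ∈ T, c t • t = ∑ t ∈ S.image toQ, (if t ∈ T then c t else 0) • t := by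
      rw [← Finset.sum_subset hsub (fun t _ ht => by rw [if_neg ht, zero_smul])]
      exact Finset.sum_congr rfl fun t ht => by rw [if_pos ht]
    rw [h1, Finset.sum_image (fun a _ b _ h => toQ_injective h)]
  · rintro ⟨c, hc, rfl⟩
    refine ⟨S.image toQ, fun v => c (invQ v), ?_, fun s => hc _, ?_⟩
    · rw [Finset.coe_image]
    · rw [Finset.sum_image (fun a _ b _ h => toQ_injective h)]
      exact Finset.sum_congr rfl fun s _ => by simp

theorem mem_coneGen_gen {n : ℕ} {S : Finset (LVec n)} {s : LVec n} (hs : s ∈ S) :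
    toQ s ∈ coneGen (toQ '' ↑S) := by
  rw [mem_coneGen_iff]
  refine ⟨fun t => if t = s then 1 else 0, fun t => by dsimp only; split <;> norm_num, ?_⟩
  have : ∀ t ∈ S, (if t = s then (1:ℚ) else 0) • toQ t = if t = s then toQ s else 0 := by
    intro t _
    split
    · next h => rw [h, one_smul]
    · rw [zero_smul]
  rw [Finset.sum_congr rfl this, Finset.sum_ite_eq' S s fun _ => toQ s, if_pos hs]

theorem coneGen_mono {n : ℕ} {S S' : Set (Vec n)} (h : S ⊆ S') : coneGen S ⊆ coneGen S' := by
  rintro x ⟨T, c, hT, hc, rfl⟩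
  exact ⟨T, c, hT.trans h, hc, rfl⟩

theorem smul_mem_coneGen {n : ℕ} {S : Set (Vec n)} {x : Vec n} (hx : x ∈ coneGen S)
    {c : ℚ} (hc : 0 ≤ c) : c • x ∈ coneGen S := by
  obtain ⟨T, c₀, hT, hc₀, rfl⟩ := hx
  refine ⟨T, fun t => c * c₀ t, hT, fun t => mul_nonneg hc (hc₀ t), ?_⟩
  rw [Finset.smul_sum]
  exact Finset.sum_congr rfl fun t _ => by rw [mul_smul]

theorem coneGen_empty {n : ℕ} : coneGen (toQ '' ((∅ : Finset (LVec n)) : Set (LVec n))) = {0} := by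
  ext x
  rw [mem_coneGen_iff]
  constructor
  · rintro ⟨c, _, rfl⟩
    simp
  · rintro rfl
    exact ⟨fun _ => 0, fun _ => le_refl _, by simp⟩

theorem mem_coneGen_singleton {n : ℕ} {v : LVec n} {x : Vec n} :
    x ∈ coneGen {toQ v} ↔ ∃ c : ℚ, 0 ≤ c ∧ x = c • toQ v := by
  have h : ({toQ v} : Set (Vec n)) = toQ '' ↑({v} : Finset (LVec n)) := by simp
  rw [h, mem_coneGen_iff]
  constructor
  · rintro ⟨c, hc, rfl⟩; exact ⟨c v, hc v, by simp⟩
  · rintro ⟨c, hc, rfl⟩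
    exact ⟨fun _ => c, fun _ => hc, by simp⟩

theorem coneGen_coe_singleton {n : ℕ} (v : LVec n) :
    coneGen (toQ '' ↑({v} : Finset (LVec n))) = coneGen {toQ v} := by simp

/-! ### Primitivity -/

theorem isPrimitive_of_coord {n : ℕ} {v : LVec n} (i : Fin n) (h : v i = 1 ∨ v i = -1) :
    IsPrimitive v := by
  constructor
  · rintro rfl; simp at h
  · rintro k w rfl
    have hk : k * w i = 1 ∨ k * w i = -1 := by
      simpa [Pi.smul_apply, smul_eq_mul] using h
    rcases hk with hk | hk
    · exact IsUnit.of_mul_eq_one _ hk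
    · refine IsUnit.of_mul_eq_one (-(w i)) ?_
      rw [mul_neg]; omega

theorem IsPrimitive.ne_zero {n : ℕ} {v : LVec n} (h : IsPrimitive v) : v ≠ 0 := h.1

/-- Two primitive lattice vectors generating the same ray (one a nonnegative rational
multiple of the other) are equal. -/
theorem eq_of_parallel {n : ℕ} {a b : LVec n} (ha : IsPrimitive a) (hb : IsPrimitive b)
    {c : ℚ} (hc : 0 ≤ c) (h : toQ a = c • toQ b) : a = b := by
  have hcne : c ≠ 0 := by
    rintro rfl
    exact ha.1 (toQ_eq_zero (by simpa using h))
  have hcpos : 0 < c := lt_of_le_of_ne hc (Ne.symm hcne)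
  have hco : ∀ i, (a i : ℚ) = c * (b i : ℚ) := by
    intro i
    have := congrFun h i
    simpa [toQ] using this
  have hnum : (c.num : ℚ) = c * (c.den : ℚ) := by
    exact (Rat.mul_den_eq_num c).symm
  have key : ∀ i, (c.den : ℤ) * a i = c.num * b i := by
    intro i
    have h2 : ((c.den : ℤ) * a i : ℚ) = ((c.num * b i : ℤ) : ℚ) := by
      push_cast
      rw [hco i, hnum]; ring
    exact_mod_cast h2
  have hcop : IsCoprime ((c.den : ℤ)) c.num := by
    rw [Int.isCoprime_iff_gcd_eq_one]
    simpa [Int.gcd, Nat.coprime_comm] using c.reduced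
  have hdvd : ∀ i, (c.den : ℤ) ∣ b i := by
    intro i
    have h1 : (c.den : ℤ) ∣ c.num * b i := ⟨a i, (key i).symm⟩
    exact hcop.dvd_of_dvd_mul_left h1
  have hb1 : b = ((c.den : ℤ)) • (fun i => b i / (c.den : ℤ)) := by
    funext i
    simp only [Pi.smul_apply, smul_eq_mul]
    exact (Int.mul_ediv_cancel' (hdvd i)).symm
  have hden1 : (c.den : ℤ) = 1 := by
    have := hb.2 _ _ hb1
    rw [Int.isUnit_iff] at this
    rcases this with h1 | h1
    · exact h1
    · exfalso; have : 0 < c.den := c.pos; omega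
  have hnum_pos : 0 < c.num := Rat.num_pos.mpr hcpos
  have hab : a = c.num • b := by
    funext i
    have := key i
    rw [hden1] at this
    simpa using this
  have : IsUnit c.num := ha.2 _ _ hab
  rw [Int.isUnit_iff] at this
  rcases this with h1 | h1
  · rw [hab, h1]; simp
  · omega

/-! ### Linear functionals -/

/-- The linear functional given by dot product with `w`. -/
def dotL {n : ℕ} (w : Vec n) : Vec n →ₗ[ℚ] ℚ := ∑ i, w i • (LinearMap.proj i)

theorem dotL_apply {n : ℕ} (w x : Vec n) : dotL w x = ∑ i, w i * x i := by
  simp [dotL]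

/-- A subset of the generators of a simplicial cone cut out by a functional gives a face. -/
theorem isFaceOf_coneGen {n : ℕ} (S₀ S : Finset (LVec n)) (u : Vec n →ₗ[ℚ] ℚ)
    (hsub : S₀ ⊆ S) (h0 : ∀ s ∈ S₀, u (toQ s) = 0)
    (hpos : ∀ s ∈ S, s ∉ S₀ → 0 < u (toQ s)) :
    IsFaceOf (coneGen (toQ '' (S₀ : Set (LVec n)))) (coneGen (toQ '' (S : Set (LVec n)))) := by
  have hnn : ∀ s ∈ S, 0 ≤ u (toQ s) := by
    intro s hs
    by_cases h : s ∈ S₀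
    · exact le_of_eq (h0 s h).symm
    · exact le_of_lt (hpos s hs h)
  refine ⟨u, ?_, ?_⟩
  · intro x hx
    rw [mem_coneGen_iff] at hx
    obtain ⟨c, hc, rfl⟩ := hx
    rw [map_sum]
    refine Finset.sum_nonneg fun s hs => ?_
    rw [map_smul]
    exact mul_nonneg (hc s) (hnn s hs)
  · ext x
    constructor
    · intro hx
      refine ⟨coneGen_mono (Set.image_mono (Finset.coe_subset.mpr hsub)) hx, ?_⟩
      rw [mem_coneGen_iff] at hx
      obtain ⟨c, hc, rfl⟩ := hx
      rw [map_sum]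
      refine Finset.sum_eq_zero fun s hs => ?_
      rw [map_smul, h0 s hs]
      simp
    · rintro ⟨hx, hux⟩
      rw [mem_coneGen_iff] at hx ⊢
      obtain ⟨c, hc, rfl⟩ := hx
      have hterms : ∀ s ∈ S, c s * u (toQ s) = 0 := by
        rw [map_sum] at hux
        have := (Finset.sum_eq_zero_iff_of_nonneg (fun s hs => by
          rw [map_smul]
          exact mul_nonneg (hc s) (hnn s hs))).mp hux
        intro s hs
        have h := this s hs
        rw [map_smul] at h
        exact h
      refine ⟨c, hc, ?_⟩
      symm
      apply Finset.sum_subset hsub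
      intro s hs hns
      have : c s = 0 := by
        have h := hterms s hs
        have hu := hpos s hs hns
        exact (mul_eq_zero.mp h).resolve_right (ne_of_gt hu)
      simp [this]
/-! ### Basis machinery -/

theorem basis_primitive {n : ℕ} (b : Module.Basis (Fin n) ℤ (LVec n)) (i : Fin n) :
    IsPrimitive (b i) := by
  constructor
  · exact b.ne_zero i
  · intro k w hkw
    have h1 : (b.repr (b i)) i = 1 := by simp
    rw [hkw] at h1
    rw [map_smul] at h1
    refine IsUnit.of_mul_eq_one ((b.repr w) i) ?_
    simpa using h1

/-- The `i`-th coordinate functional of a `ℤ`-basis, as a `ℚ`-linear functional on `ℚ^n`. -/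
noncomputable def Cdual {n : ℕ} (b : Module.Basis (Fin n) ℤ (LVec n)) (i : Fin n) : Vec n →ₗ[ℚ] ℚ :=
  ∑ j, (((b.repr (Pi.single j 1)) i : ℤ) : ℚ) • (LinearMap.proj j)

theorem Cdual_toQ {n : ℕ} (b : Module.Basis (Fin n) ℤ (LVec n)) (i : Fin n) (v : LVec n) :
    Cdual b i (toQ v) = ((b.repr v) i : ℚ) := by
  have hv : v = ∑ j, v j • (Pi.single j 1 : LVec n) := by
    funext k
    rw [Finset.sum_apply]
    rw [Finset.sum_eq_single k]
    · simp
    · intro j _ hj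
      simp [Pi.single_apply, hj]
    · intro h; exact absurd (Finset.mem_univ k) h
  conv_rhs => rw [hv]
  rw [map_sum]
  simp only [map_smul]
  rw [Finsupp.coe_finset_sum, Finset.sum_apply]
  simp only [Finsupp.coe_smul, Pi.smul_apply, smul_eq_mul]
  rw [Cdual, LinearMap.sum_apply]
  push_cast
  refine Finset.sum_congr rfl fun j _ => ?_
  simp [toQ, mul_comm]

theorem Cdual_basis {n : ℕ} (b : Module.Basis (Fin n) ℤ (LVec n)) (i j : Fin n) :
    Cdual b i (toQ (b j)) = if j = i then 1 else 0 := by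
  rw [Cdual_toQ]
  simp [Module.Basis.repr_self, Finsupp.single_apply]

/-- For a cone of a smooth fan, `{0}` (as the cone on the empty set) is a face. -/
theorem face_zero_of_smooth {n : ℕ} {F : Set (Set (Vec n))} (hF : IsSmoothCompleteFan F)
    {σ : Set (Vec n)} (hσ : σ ∈ F) :
    IsFaceOf (coneGen (toQ '' ((∅ : Finset (LVec n)) : Set (LVec n)))) σ := by
  obtain ⟨b, I, hrep⟩ := hF.smooth σ hσ
  have himg : (⇑b '' ↑I : Set (LVec n)) = ((I.image ⇑b : Finset (LVec n)) : Set (LVec n)) := by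
    rw [Finset.coe_image]
  rw [himg] at hrep
  rw [hrep]
  refine isFaceOf_coneGen ∅ (I.image ⇑b) (∑ i ∈ I, Cdual b i) (Finset.empty_subset _)
    (fun s hs => absurd hs (Finset.notMem_empty s)) ?_
  intro s hs _
  rw [Finset.mem_image] at hs
  obtain ⟨i₀, hi₀, rfl⟩ := hs
  rw [LinearMap.sum_apply]
  have : ∀ i ∈ I, Cdual b i (toQ (b i₀)) = if i = i₀ then 1 else 0 := by
    intro i _
    rw [Cdual_basis]
    simp [eq_comm]
  rw [Finset.sum_congr rfl this, Finset.sum_ite_eq' I i₀ (fun _ => (1:ℚ)), if_pos hi₀]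
  norm_num

/-- Every element of `gens F` lying in a cone `σ` of a smooth fan is one of the basis
generators of `σ`. -/
theorem gen_mem_basis_image {n : ℕ} {F : Set (Set (Vec n))} (hF : IsSmoothCompleteFan F)
    {σ : Set (Vec n)} (hσ : σ ∈ F) (b : Module.Basis (Fin n) ℤ (LVec n)) (I : Finset (Fin n))
    (hrep : σ = coneGen (toQ '' ((I.image ⇑b : Finset (LVec n)) : Set (LVec n))))
    {t : LVec n} (ht : t ∈ gens F) (htσ : toQ t ∈ σ) : ∃ i ∈ I, b i = t := by
  have hray : coneGen {toQ t} ∈ F := ht.2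
  have hraysub : coneGen {toQ t} ⊆ σ := by
    intro z hz
    rw [mem_coneGen_singleton] at hz
    obtain ⟨c, hc, rfl⟩ := hz
    rw [hrep] at htσ ⊢
    exact smul_mem_coneGen htσ hc
  obtain ⟨hface, -⟩ := hF.inter σ hσ _ hray
  rw [Set.inter_eq_self_of_subset_right hraysub] at hface
  obtain ⟨u, hu0, hset⟩ := hface
  have htmem : toQ t ∈ coneGen {toQ t} := by
    rw [mem_coneGen_singleton]; exact ⟨1, zero_le_one, (one_smul _ _).symm⟩
  have hut : u (toQ t) = 0 := by
    rw [hset] at htmem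
    exact htmem.2
  have htσ' := htσ
  rw [hrep, mem_coneGen_iff] at htσ'
  obtain ⟨c, hc, hsum⟩ := htσ'
  have hgenmem : ∀ s ∈ I.image ⇑b, toQ s ∈ σ := by
    intro s hs
    rw [hrep]
    exact mem_coneGen_gen hs
  have hterms : ∀ s ∈ I.image ⇑b, c s * u (toQ s) = 0 := by
    have h0 : ∑ s ∈ I.image ⇑b, c s * u (toQ s) = 0 := by
      have := congrArg u hsum
      rw [hut, map_sum] at this
      simp only [map_smul, smul_eq_mul] at this
      exact this.symm
    intro s hs
    exact (Finset.sum_eq_zero_iff_of_nonneg (fun s hs =>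
      mul_nonneg (hc s) (hu0 _ (hgenmem s hs)))).mp h0 s hs
  by_cases hex : ∃ s ∈ I.image ⇑b, c s ≠ 0
  · obtain ⟨s, hs, hcs⟩ := hex
    have hus : u (toQ s) = 0 := by
      have := hterms s hs
      exact (mul_eq_zero.mp this).resolve_left hcs
    have hsray : toQ s ∈ coneGen {toQ t} := by
      rw [hset]
      exact ⟨hgenmem s hs, hus⟩
    rw [mem_coneGen_singleton] at hsray
    obtain ⟨d, hd, hds⟩ := hsray
    rw [Finset.mem_image] at hs
    obtain ⟨i, hi, rfl⟩ := hs
    have : b i = t := eq_of_parallel (basis_primitive b i) ht.1 hd hds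
    exact ⟨i, hi, this⟩
  · exfalso
    push_neg at hex
    have : toQ t = 0 := by
      rw [hsum]
      refine Finset.sum_eq_zero fun s hs => ?_
      rw [hex s hs, zero_smul]
    exact ht.1.1 (toQ_eq_zero this)

/-- Structure of the finset `T` generating a cone of a smooth fan: the sum of `T` is
primitive, and no nonempty subset of `T` has zero sum. -/
theorem T_structure {n : ℕ} {F : Set (Set (Vec n))} (hF : IsSmoothCompleteFan F)
    {T : Finset (LVec n)} (hTg : (↑T : Set (LVec n)) ⊆ gens F)
    (hconeT : coneGen (toQ '' ↑T) ∈ F) (hne : T.Nonempty) :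
    IsPrimitive (∑ t ∈ T, t) ∧ (∀ S ⊆ T, S.Nonempty → ∑ t ∈ S, t ≠ 0) := by
  obtain ⟨b, I, hrep⟩ := hF.smooth _ hconeT
  have himg : (⇑b '' ↑I : Set (LVec n)) = ((I.image ⇑b : Finset (LVec n)) : Set (LVec n)) := by
    rw [Finset.coe_image]
  rw [himg] at hrep
  have hpin : ∀ t ∈ T, ∃ i ∈ I, b i = t := by
    intro t ht
    exact gen_mem_basis_image hF hconeT b I hrep (hTg ht)
      (by exact mem_coneGen_gen ht)
  -- key: for t₀ ∈ S ⊆ T, the repr of ∑_{t ∈ S} t at the index of t₀ is 1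
  have key : ∀ S ⊆ T, ∀ t₀ ∈ S, ∀ i₀, b i₀ = t₀ → (b.repr (∑ t ∈ S, t)) i₀ = 1 := by
    intro S hS t₀ ht₀ i₀ hbi₀
    rw [map_sum, Finsupp.coe_finset_sum, Finset.sum_apply]
    have hterm : ∀ t ∈ S, (b.repr t) i₀ = if t = t₀ then 1 else 0 := by
      intro t ht
      obtain ⟨i, _, hbi⟩ := hpin t (hS ht)
      rw [← hbi]
      simp only [Module.Basis.repr_self, Finsupp.single_apply]
      by_cases h : i = i₀
      · rw [if_pos h, if_pos (by rw [h, hbi₀])]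
      · rw [if_neg h, if_neg (fun ht' => h (b.injective (ht'.trans hbi₀.symm)))]
    rw [Finset.sum_congr rfl hterm, Finset.sum_ite_eq' S t₀ (fun _ => (1:ℤ)), if_pos ht₀]
  constructor
  · obtain ⟨t₀, ht₀⟩ := hne
    obtain ⟨i₀, _, hbi₀⟩ := hpin t₀ ht₀
    have h1 : (b.repr (∑ t ∈ T, t)) i₀ = 1 := key T Finset.Subset.rfl t₀ ht₀ i₀ hbi₀
    constructor
    · intro h0
      rw [h0] at h1
      simp at h1
    · intro k w hkw
      rw [hkw, map_smul] at h1
      refine IsUnit.of_mul_eq_one ((b.repr w) i₀) ?_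
      simpa using h1
  · intro S hS hSne h0
    obtain ⟨t₀, ht₀⟩ := hSne
    obtain ⟨i₀, _, hbi₀⟩ := hpin t₀ (hS ht₀)
    have h1 : (b.repr (∑ t ∈ S, t)) i₀ = 1 := key S hS t₀ ht₀ i₀ hbi₀
    rw [h0] at h1
    simp at h1
/-! ### Concrete vectors -/

theorem vec_ext {x y : Vec 4} (h0 : x 0 = y 0) (h1 : x 1 = y 1) (h2 : x 2 = y 2)
    (h3 : x 3 = y 3) : x = y := by
  funext i
  fin_cases i <;> assumption

theorem sum2 {α β : Type*} [DecidableEq α] [AddCommMonoid β] (f : α → β) {a b : α}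
    (hab : a ≠ b) : ∑ s ∈ ({a, b} : Finset α), f s = f a + f b := by
  rw [Finset.sum_insert (by simp [hab]), Finset.sum_singleton]

theorem sum3 {α β : Type*} [DecidableEq α] [AddCommMonoid β] (f : α → β) {a b c : α}
    (hab : a ≠ b) (hac : a ≠ c) (hbc : b ≠ c) :
    ∑ s ∈ ({a, b, c} : Finset α), f s = f a + (f b + f c) := by
  rw [Finset.sum_insert (by simp [hab, hac]), sum2 f hbc]

theorem sum4 {α β : Type*} [DecidableEq α] [AddCommMonoid β] (f : α → β) {a b c d : α}
    (hab : a ≠ b) (hac : a ≠ c) (had : a ≠ d) (hbc : b ≠ c) (hbd : b ≠ d) (hcd : c ≠ d) :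
    ∑ s ∈ ({a, b, c, d} : Finset α), f s = f a + (f b + (f c + f d)) := by
  rw [Finset.sum_insert (by simp [hab, hac, had]), sum3 f hbc hbd hcd]

theorem add_mem_coneGen {n : ℕ} {S : Set (Vec n)} {x y : Vec n}
    (hx : x ∈ coneGen S) (hy : y ∈ coneGen S) : x + y ∈ coneGen S := by
  obtain ⟨T1, c1, h1, hc1, rfl⟩ := hx
  obtain ⟨T2, c2, h2, hc2, rfl⟩ := hy
  refine ⟨T1 ∪ T2, fun s => (if s ∈ T1 then c1 s else 0) + (if s ∈ T2 then c2 s else 0),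
    ?_, ?_, ?_⟩
  · rw [Finset.coe_union]
    exact Set.union_subset h1 h2
  · intro s
    refine add_nonneg ?_ ?_ <;> split
    · exact hc1 s
    · exact le_refl 0
    · exact hc2 s
    · exact le_refl 0
  · have e1 : ∑ s ∈ T1, c1 s • s = ∑ s ∈ T1 ∪ T2, (if s ∈ T1 then c1 s else 0) • s := by
      rw [← Finset.sum_subset Finset.subset_union_left
        (fun t _ ht => by rw [if_neg ht, zero_smul])]
      exact Finset.sum_congr rfl fun t ht => by rw [if_pos ht]
    have e2 : ∑ s ∈ T2, c2 s • s = ∑ s ∈ T1 ∪ T2, (if s ∈ T2 then c2 s else 0) • s := by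
      rw [← Finset.sum_subset Finset.subset_union_right
        (fun t _ ht => by rw [if_neg ht, zero_smul])]
      exact Finset.sum_congr rfl fun t ht => by rw [if_pos ht]
    rw [e1, e2, ← Finset.sum_add_distrib]
    exact Finset.sum_congr rfl fun s _ => by rw [add_smul]

@[simp] theorem e0_c0 : e0 0 = -1 := by decide
@[simp] theorem e0_c1 : e0 1 = -1 := by decide
@[simp] theorem e0_c2 : e0 2 = -1 := by decide
@[simp] theorem e0_c3 : e0 3 = -1 := by decide
@[simp] theorem e1_c0 : e1 0 = 1 := by decide
@[simp] theorem e1_c1 : e1 1 = 0 := by decide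
@[simp] theorem e1_c2 : e1 2 = 0 := by decide
@[simp] theorem e1_c3 : e1 3 = 0 := by decide
@[simp] theorem e2_c0 : e2 0 = 0 := by decide
@[simp] theorem e2_c1 : e2 1 = 1 := by decide
@[simp] theorem e2_c2 : e2 2 = 0 := by decide
@[simp] theorem e2_c3 : e2 3 = 0 := by decide
@[simp] theorem e3_c0 : e3 0 = 0 := by decide
@[simp] theorem e3_c1 : e3 1 = 0 := by decide
@[simp] theorem e3_c2 : e3 2 = 1 := by decide
@[simp] theorem e3_c3 : e3 3 = 0 := by decide
@[simp] theorem e4_c0 : e4 0 = 0 := by decide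
@[simp] theorem e4_c1 : e4 1 = 0 := by decide
@[simp] theorem e4_c2 : e4 2 = 0 := by decide
@[simp] theorem e4_c3 : e4 3 = 1 := by decide
@[simp] theorem e5_c0 : e5 0 = 1 := by decide
@[simp] theorem e5_c1 : e5 1 = 1 := by decide
@[simp] theorem e5_c2 : e5 2 = 1 := by decide
@[simp] theorem e5_c3 : e5 3 = 0 := by decide
@[simp] theorem e6_c0 : e6 0 = 0 := by decide
@[simp] theorem e6_c1 : e6 1 = 1 := by decide
@[simp] theorem e6_c2 : e6 2 = 1 := by decide
@[simp] theorem e6_c3 : e6 3 = 1 := by decide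
@[simp] theorem e7_c0 : e7 0 = 1 := by decide
@[simp] theorem e7_c1 : e7 1 = 1 := by decide
@[simp] theorem e7_c2 : e7 2 = 1 := by decide
@[simp] theorem e7_c3 : e7 3 = 1 := by decide

theorem prim_e0 : IsPrimitive e0 := isPrimitive_of_coord 0 (Or.inr (by decide))
theorem prim_e1 : IsPrimitive e1 := isPrimitive_of_coord 0 (Or.inl (by decide))
theorem prim_e2 : IsPrimitive e2 := isPrimitive_of_coord 1 (Or.inl (by decide))
theorem prim_e3 : IsPrimitive e3 := isPrimitive_of_coord 2 (Or.inl (by decide))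
theorem prim_e4 : IsPrimitive e4 := isPrimitive_of_coord 3 (Or.inl (by decide))
theorem prim_e5 : IsPrimitive e5 := isPrimitive_of_coord 0 (Or.inl (by decide))
theorem prim_e6 : IsPrimitive e6 := isPrimitive_of_coord 1 (Or.inl (by decide))
theorem prim_e7 : IsPrimitive e7 := isPrimitive_of_coord 0 (Or.inl (by decide))

/-! ### Non-containment helpers -/

theorem not_subset_ray {S : Finset (LVec 4)} {s v : LVec 4} (hs : s ∈ S)
    (hps : IsPrimitive s) (hpv : IsPrimitive v) (hne : s ≠ v) :
    ¬ coneGen (toQ '' ↑S) ⊆ coneGen {toQ v} := by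
  intro h
  have hm := h (mem_coneGen_gen hs)
  rw [mem_coneGen_singleton] at hm
  obtain ⟨c, hc, hcs⟩ := hm
  exact hne (eq_of_parallel hps hpv hc hcs)

theorem not_subset_fray {S : Finset (LVec 4)} {s v : LVec 4} (hs : s ∈ S)
    (hps : IsPrimitive s) (hpv : IsPrimitive v) (hne : s ≠ v) :
    ¬ coneGen (toQ '' ↑S) ⊆ coneGen (toQ '' (({v} : Finset (LVec 4)) : Set (LVec 4))) := by
  rw [coneGen_coe_singleton]
  exact not_subset_ray hs hps hpv hne

theorem not_subset_of_gen_not_mem {S S' : Finset (LVec 4)} {s : LVec 4} (hs : s ∈ S)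
    (h : toQ s ∉ coneGen (toQ '' (S' : Set (LVec 4)))) :
    ¬ coneGen (toQ '' ↑S) ⊆ coneGen (toQ '' (S' : Set (LVec 4))) :=
  fun hsub => h (hsub (mem_coneGen_gen hs))

theorem not_subset_empty {S : Finset (LVec 4)} {s : LVec 4} (hs : s ∈ S) (h : s ≠ 0) :
    ¬ coneGen (toQ '' ↑S) ⊆ coneGen (toQ '' (↑(∅ : Finset (LVec 4)) : Set (LVec 4))) := by
  intro hsub
  have := hsub (mem_coneGen_gen hs)
  rw [coneGen_empty] at this
  exact h (toQ_eq_zero this)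

theorem R_e1_234 : toQ e1 ∉ coneGen (toQ '' (↑({e2, e3, e4} : Finset (LVec 4)))) := by
  rw [mem_coneGen_iff]
  rintro ⟨c, hc, hs⟩
  rw [sum3 _ (by decide) (by decide) (by decide)] at hs
  have h0 := congrFun hs 0
  have h1 := congrFun hs 1
  have h2 := congrFun hs 2
  have h3 := congrFun hs 3
  simp only [toQ_apply, Pi.add_apply, Pi.smul_apply, smul_eq_mul] at h0 h1 h2 h3
  norm_num at h0
  all_goals linarith [hc e2, hc e3, hc e4]

theorem R_e2_45 : toQ e2 ∉ coneGen (toQ '' (↑({e4, e5} : Finset (LVec 4)))) := by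
  rw [mem_coneGen_iff]
  rintro ⟨c, hc, hs⟩
  rw [sum2 _ (by decide)] at hs
  have h0 := congrFun hs 0
  have h1 := congrFun hs 1
  have h2 := congrFun hs 2
  have h3 := congrFun hs 3
  simp only [toQ_apply, Pi.add_apply, Pi.smul_apply, smul_eq_mul] at h0 h1 h2 h3
  norm_num at h0 h1 h2 h3
  all_goals linarith [hc e4, hc e5]

theorem R_e3_245 : toQ e3 ∉ coneGen (toQ '' (↑({e2, e4, e5} : Finset (LVec 4)))) := by
  rw [mem_coneGen_iff]
  rintro ⟨c, hc, hs⟩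
  rw [sum3 _ (by decide) (by decide) (by decide)] at hs
  have h0 := congrFun hs 0
  have h1 := congrFun hs 1
  have h2 := congrFun hs 2
  have h3 := congrFun hs 3
  simp only [toQ_apply, Pi.add_apply, Pi.smul_apply, smul_eq_mul] at h0 h1 h2 h3
  norm_num at h0 h1 h2 h3
  all_goals linarith [hc e2, hc e4, hc e5]

theorem R_e2_345 : toQ e2 ∉ coneGen (toQ '' (↑({e3, e4, e5} : Finset (LVec 4)))) := by
  rw [mem_coneGen_iff]
  rintro ⟨c, hc, hs⟩
  rw [sum3 _ (by decide) (by decide) (by decide)] at hs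
  have h0 := congrFun hs 0
  have h1 := congrFun hs 1
  have h2 := congrFun hs 2
  have h3 := congrFun hs 3
  simp only [toQ_apply, Pi.add_apply, Pi.smul_apply, smul_eq_mul] at h0 h1 h2 h3
  norm_num at h0 h1 h2 h3
  all_goals linarith [hc e3, hc e4, hc e5]

theorem R_e4_256 : toQ e4 ∉ coneGen (toQ '' (↑({e2, e5, e6} : Finset (LVec 4)))) := by
  rw [mem_coneGen_iff]
  rintro ⟨c, hc, hs⟩
  rw [sum3 _ (by decide) (by decide) (by decide)] at hs
  have h0 := congrFun hs 0
  have h1 := congrFun hs 1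
  have h2 := congrFun hs 2
  have h3 := congrFun hs 3
  simp only [toQ_apply, Pi.add_apply, Pi.smul_apply, smul_eq_mul] at h0 h1 h2 h3
  norm_num at h0 h1 h2 h3
  all_goals linarith [hc e2, hc e5, hc e6]

theorem R_e4_356 : toQ e4 ∉ coneGen (toQ '' (↑({e3, e5, e6} : Finset (LVec 4)))) := by
  rw [mem_coneGen_iff]
  rintro ⟨c, hc, hs⟩
  rw [sum3 _ (by decide) (by decide) (by decide)] at hs
  have h0 := congrFun hs 0
  have h1 := congrFun hs 1
  have h2 := congrFun hs 2
  have h3 := congrFun hs 3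
  simp only [toQ_apply, Pi.add_apply, Pi.smul_apply, smul_eq_mul] at h0 h1 h2 h3
  norm_num at h0 h1 h2 h3
  all_goals linarith [hc e3, hc e5, hc e6]

theorem R_e0_C2 : toQ e0 ∉ coneGen (toQ '' (↑({e2, e5, e6, e7} : Finset (LVec 4)))) := by
  rw [mem_coneGen_iff]
  rintro ⟨c, hc, hs⟩
  rw [sum4 _ (by decide) (by decide) (by decide) (by decide) (by decide) (by decide)] at hs
  have h0 := congrFun hs 0
  have h1 := congrFun hs 1
  have h2 := congrFun hs 2
  have h3 := congrFun hs 3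
  simp only [toQ_apply, Pi.add_apply, Pi.smul_apply, smul_eq_mul] at h0 h1 h2 h3
  norm_num at h0 h1 h2 h3
  all_goals linarith [hc e2, hc e5, hc e6, hc e7]

theorem R_e1_C2 : toQ e1 ∉ coneGen (toQ '' (↑({e2, e5, e6, e7} : Finset (LVec 4)))) := by
  rw [mem_coneGen_iff]
  rintro ⟨c, hc, hs⟩
  rw [sum4 _ (by decide) (by decide) (by decide) (by decide) (by decide) (by decide)] at hs
  have h0 := congrFun hs 0
  have h1 := congrFun hs 1
  have h2 := congrFun hs 2
  have h3 := congrFun hs 3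
  simp only [toQ_apply, Pi.add_apply, Pi.smul_apply, smul_eq_mul] at h0 h1 h2 h3
  norm_num at h0 h1 h2 h3
  all_goals linarith [hc e2, hc e5, hc e6, hc e7]

theorem R_e3_C2 : toQ e3 ∉ coneGen (toQ '' (↑({e2, e5, e6, e7} : Finset (LVec 4)))) := by
  rw [mem_coneGen_iff]
  rintro ⟨c, hc, hs⟩
  rw [sum4 _ (by decide) (by decide) (by decide) (by decide) (by decide) (by decide)] at hs
  have h0 := congrFun hs 0
  have h1 := congrFun hs 1
  have h2 := congrFun hs 2
  have h3 := congrFun hs 3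
  simp only [toQ_apply, Pi.add_apply, Pi.smul_apply, smul_eq_mul] at h0 h1 h2 h3
  norm_num at h0 h1 h2 h3
  all_goals linarith [hc e2, hc e5, hc e6, hc e7]

theorem R_e4_C2 : toQ e4 ∉ coneGen (toQ '' (↑({e2, e5, e6, e7} : Finset (LVec 4)))) := by
  rw [mem_coneGen_iff]
  rintro ⟨c, hc, hs⟩
  rw [sum4 _ (by decide) (by decide) (by decide) (by decide) (by decide) (by decide)] at hs
  have h0 := congrFun hs 0
  have h1 := congrFun hs 1
  have h2 := congrFun hs 2
  have h3 := congrFun hs 3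
  simp only [toQ_apply, Pi.add_apply, Pi.smul_apply, smul_eq_mul] at h0 h1 h2 h3
  norm_num at h0 h1 h2 h3
  all_goals linarith [hc e2, hc e5, hc e6, hc e7]

theorem R_e6_257 : toQ e6 ∉ coneGen (toQ '' (↑({e2, e5, e7} : Finset (LVec 4)))) := by
  rw [mem_coneGen_iff]
  rintro ⟨c, hc, hs⟩
  rw [sum3 _ (by decide) (by decide) (by decide)] at hs
  have h0 := congrFun hs 0
  have h1 := congrFun hs 1
  have h2 := congrFun hs 2
  have h3 := congrFun hs 3
  simp only [toQ_apply, Pi.add_apply, Pi.smul_apply, smul_eq_mul] at h0 h1 h2 h3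
  norm_num at h0 h1 h2 h3
  all_goals linarith [hc e2, hc e5, hc e7]

theorem R_e7_256 : toQ e7 ∉ coneGen (toQ '' (↑({e2, e5, e6} : Finset (LVec 4)))) := by
  rw [mem_coneGen_iff]
  rintro ⟨c, hc, hs⟩
  rw [sum3 _ (by decide) (by decide) (by decide)] at hs
  have h0 := congrFun hs 0
  have h1 := congrFun hs 1
  have h2 := congrFun hs 2
  have h3 := congrFun hs 3
  simp only [toQ_apply, Pi.add_apply, Pi.smul_apply, smul_eq_mul] at h0 h1 h2 h3
  norm_num at h0 h1 h2 h3
  all_goals linarith [hc e2, hc e5, hc e6]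

theorem R_e0_C2p : toQ e0 ∉ coneGen (toQ '' (↑({e3, e5, e6, e7} : Finset (LVec 4)))) := by
  rw [mem_coneGen_iff]
  rintro ⟨c, hc, hs⟩
  rw [sum4 _ (by decide) (by decide) (by decide) (by decide) (by decide) (by decide)] at hs
  have h0 := congrFun hs 0
  have h1 := congrFun hs 1
  have h2 := congrFun hs 2
  have h3 := congrFun hs 3
  simp only [toQ_apply, Pi.add_apply, Pi.smul_apply, smul_eq_mul] at h0 h1 h2 h3
  norm_num at h0 h1 h2 h3
  all_goals linarith [hc e3, hc e5, hc e6, hc e7]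

theorem R_e1_C2p : toQ e1 ∉ coneGen (toQ '' (↑({e3, e5, e6, e7} : Finset (LVec 4)))) := by
  rw [mem_coneGen_iff]
  rintro ⟨c, hc, hs⟩
  rw [sum4 _ (by decide) (by decide) (by decide) (by decide) (by decide) (by decide)] at hs
  have h0 := congrFun hs 0
  have h1 := congrFun hs 1
  have h2 := congrFun hs 2
  have h3 := congrFun hs 3
  simp only [toQ_apply, Pi.add_apply, Pi.smul_apply, smul_eq_mul] at h0 h1 h2 h3
  norm_num at h0 h1 h2 h3
  all_goals linarith [hc e3, hc e5, hc e6, hc e7]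

theorem R_e2_C2p : toQ e2 ∉ coneGen (toQ '' (↑({e3, e5, e6, e7} : Finset (LVec 4)))) := by
  rw [mem_coneGen_iff]
  rintro ⟨c, hc, hs⟩
  rw [sum4 _ (by decide) (by decide) (by decide) (by decide) (by decide) (by decide)] at hs
  have h0 := congrFun hs 0
  have h1 := congrFun hs 1
  have h2 := congrFun hs 2
  have h3 := congrFun hs 3
  simp only [toQ_apply, Pi.add_apply, Pi.smul_apply, smul_eq_mul] at h0 h1 h2 h3
  norm_num at h0 h1 h2 h3
  all_goals linarith [hc e3, hc e5, hc e6, hc e7]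

theorem R_e4_C2p : toQ e4 ∉ coneGen (toQ '' (↑({e3, e5, e6, e7} : Finset (LVec 4)))) := by
  rw [mem_coneGen_iff]
  rintro ⟨c, hc, hs⟩
  rw [sum4 _ (by decide) (by decide) (by decide) (by decide) (by decide) (by decide)] at hs
  have h0 := congrFun hs 0
  have h1 := congrFun hs 1
  have h2 := congrFun hs 2
  have h3 := congrFun hs 3
  simp only [toQ_apply, Pi.add_apply, Pi.smul_apply, smul_eq_mul] at h0 h1 h2 h3
  norm_num at h0 h1 h2 h3
  all_goals linarith [hc e3, hc e5, hc e6, hc e7]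

theorem R_e5_367 : toQ e5 ∉ coneGen (toQ '' (↑({e3, e6, e7} : Finset (LVec 4)))) := by
  rw [mem_coneGen_iff]
  rintro ⟨c, hc, hs⟩
  rw [sum3 _ (by decide) (by decide) (by decide)] at hs
  have h0 := congrFun hs 0
  have h1 := congrFun hs 1
  have h2 := congrFun hs 2
  have h3 := congrFun hs 3
  simp only [toQ_apply, Pi.add_apply, Pi.smul_apply, smul_eq_mul] at h0 h1 h2 h3
  norm_num at h0 h1 h2 h3
  all_goals linarith [hc e3, hc e6, hc e7]

theorem R_e7_356 : toQ e7 ∉ coneGen (toQ '' (↑({e3, e5, e6} : Finset (LVec 4)))) := by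
  rw [mem_coneGen_iff]
  rintro ⟨c, hc, hs⟩
  rw [sum3 _ (by decide) (by decide) (by decide)] at hs
  have h0 := congrFun hs 0
  have h1 := congrFun hs 1
  have h2 := congrFun hs 2
  have h3 := congrFun hs 3
  simp only [toQ_apply, Pi.add_apply, Pi.smul_apply, smul_eq_mul] at h0 h1 h2 h3
  norm_num at h0 h1 h2 h3
  all_goals linarith [hc e3, hc e5, hc e6]

theorem R_e4_16 : toQ e4 ∉ coneGen (toQ '' (↑({e1, e6} : Finset (LVec 4)))) := by
  rw [mem_coneGen_iff]
  rintro ⟨c, hc, hs⟩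
  rw [sum2 _ (by decide)] at hs
  have h0 := congrFun hs 0
  have h1 := congrFun hs 1
  have h2 := congrFun hs 2
  have h3 := congrFun hs 3
  simp only [toQ_apply, Pi.add_apply, Pi.smul_apply, smul_eq_mul] at h0 h1 h2 h3
  norm_num at h0 h1 h2 h3
  all_goals linarith [hc e1, hc e6]

theorem R_e1_45 : toQ e1 ∉ coneGen (toQ '' (↑({e4, e5} : Finset (LVec 4)))) := by
  rw [mem_coneGen_iff]
  rintro ⟨c, hc, hs⟩
  rw [sum2 _ (by decide)] at hs
  have h0 := congrFun hs 0
  have h1 := congrFun hs 1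
  have h2 := congrFun hs 2
  have h3 := congrFun hs 3
  simp only [toQ_apply, Pi.add_apply, Pi.smul_apply, smul_eq_mul] at h0 h1 h2 h3
  norm_num at h0 h1 h2 h3
  all_goals linarith [hc e4, hc e5]
/-! ### Membership in star subdivisions -/

theorem mem_starSubdiv_old {F : Set (Set (Vec 4))} {T : Finset (LVec 4)} {σ : Set (Vec 4)}
    (hσ : σ ∈ F) (h : ¬ coneGen (toQ '' ↑T) ⊆ σ) : σ ∈ starSubdiv F T :=
  Or.inl ⟨hσ, h⟩

theorem mem_starSubdiv_new {F : Set (Set (Vec 4))} {T A : Finset (LVec 4)}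
    (hA : (A : Set (LVec 4)) ⊆ gens F) {σ : Set (Vec 4)} (hσ : σ ∈ F)
    (hTσ : coneGen (toQ '' (T : Set (LVec 4))) ⊆ σ)
    (hface : IsFaceOf (coneGen (toQ '' (A : Set (LVec 4)))) σ)
    (hnc : ¬ coneGen (toQ '' (T : Set (LVec 4))) ⊆ coneGen (toQ '' (A : Set (LVec 4)))) :
    coneGen (toQ '' (↑(insert (∑ t ∈ T, t) A) : Set (LVec 4))) ∈ starSubdiv F T :=
  Or.inr ⟨A, hA, ⟨σ, hσ, hTσ, hface⟩, hnc, rfl⟩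

theorem mem_gens {F : Set (Set (Vec 4))} {v : LVec 4} (h1 : IsPrimitive v)
    (h2 : coneGen {toQ v} ∈ F) : v ∈ gens F := ⟨h1, h2⟩

theorem coneGen_finset_mono {S S' : Finset (LVec 4)} (h : S ⊆ S') :
    coneGen (toQ '' (S : Set (LVec 4))) ⊆ coneGen (toQ '' (S' : Set (LVec 4))) :=
  coneGen_mono (Set.image_mono (Finset.coe_subset.mpr h))

/-! ### The fan of `ℙ⁴` -/

theorem P4_mem {S : Finset (LVec 4)} (h : S ⊂ {e0, e1, e2, e3, e4}) :
    coneGen (toQ '' (S : Set (LVec 4))) ∈ SigmaP4 := ⟨S, h, rfl⟩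

theorem rayP4 {v : LVec 4} (h : ({v} : Finset (LVec 4)) ⊂ {e0, e1, e2, e3, e4}) :
    coneGen {toQ v} ∈ SigmaP4 := by
  rw [← coneGen_coe_singleton]
  exact P4_mem h

theorem rayP4_e0 : coneGen {toQ e0} ∈ SigmaP4 := rayP4 (by decide)
theorem rayP4_e1 : coneGen {toQ e1} ∈ SigmaP4 := rayP4 (by decide)
theorem rayP4_e2 : coneGen {toQ e2} ∈ SigmaP4 := rayP4 (by decide)
theorem rayP4_e3 : coneGen {toQ e3} ∈ SigmaP4 := rayP4 (by decide)
theorem rayP4_e4 : coneGen {toQ e4} ∈ SigmaP4 := rayP4 (by decide)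

/-! ### The fan `Σ_X` -/

theorem rayX_e0 : coneGen {toQ e0} ∈ SigmaX :=
  mem_starSubdiv_old rayP4_e0 (not_subset_ray (by decide) prim_e1 prim_e0 (by decide))
theorem rayX_e1 : coneGen {toQ e1} ∈ SigmaX :=
  mem_starSubdiv_old rayP4_e1 (not_subset_ray (by decide) prim_e2 prim_e1 (by decide))
theorem rayX_e2 : coneGen {toQ e2} ∈ SigmaX :=
  mem_starSubdiv_old rayP4_e2 (not_subset_ray (by decide) prim_e1 prim_e2 (by decide))
theorem rayX_e3 : coneGen {toQ e3} ∈ SigmaX :=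
  mem_starSubdiv_old rayP4_e3 (not_subset_ray (by decide) prim_e1 prim_e3 (by decide))
theorem rayX_e4 : coneGen {toQ e4} ∈ SigmaX :=
  mem_starSubdiv_old rayP4_e4 (not_subset_ray (by decide) prim_e1 prim_e4 (by decide))

theorem rayX_e5 : coneGen {toQ e5} ∈ SigmaX := by
  have h := mem_starSubdiv_new (F := SigmaP4) (T := {e1, e2, e3}) (A := ∅)
    (by simp) (P4_mem (S := {e1, e2, e3}) (by decide)) subset_rfl
    (isFaceOf_coneGen ∅ {e1, e2, e3} (dotL ![1, 1, 1, 0]) (Finset.empty_subset _)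
      (fun s hs => absurd hs (Finset.notMem_empty s))
      (by
        intro s hs _
        fin_cases hs <;> norm_num [dotL_apply, Fin.sum_univ_four, Matrix.cons_val_two, Matrix.cons_val_three]))
    (not_subset_empty (s := e1) (by decide) (by decide))
  rw [show insert (∑ t ∈ ({e1, e2, e3} : Finset (LVec 4)), t) ∅ = ({e5} : Finset (LVec 4))
    from by decide] at h
  rwa [coneGen_coe_singleton] at h

theorem coneX_e234 : coneGen (toQ '' (({e2, e3, e4} : Finset (LVec 4)) : Set (LVec 4))) ∈ SigmaX :=
  mem_starSubdiv_old (P4_mem (by decide)) (not_subset_of_gen_not_mem (by decide) R_e1_234)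

theorem coneX_e45 : coneGen (toQ '' (({e4, e5} : Finset (LVec 4)) : Set (LVec 4))) ∈ SigmaX := by
  have h := mem_starSubdiv_new (F := SigmaP4) (T := {e1, e2, e3}) (A := {e4})
    (by
      intro a ha
      simp only [Finset.coe_singleton, Set.mem_singleton_iff] at ha
      subst ha
      exact mem_gens prim_e4 rayP4_e4)
    (P4_mem (S := {e1, e2, e3, e4}) (by decide)) (coneGen_finset_mono (by decide))
    (isFaceOf_coneGen {e4} {e1, e2, e3, e4} (dotL ![1, 1, 1, 0]) (by decide)
      (by
        intro s hs
        fin_cases hs <;> norm_num [dotL_apply, Fin.sum_univ_four, Matrix.cons_val_two, Matrix.cons_val_three])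
      (by
        intro s hs hns
        fin_cases hs <;> simp_all <;> norm_num [dotL_apply, Fin.sum_univ_four, Matrix.cons_val_two, Matrix.cons_val_three]))
    (not_subset_fray (by decide) prim_e1 prim_e4 (by decide))
  rw [show insert (∑ t ∈ ({e1, e2, e3} : Finset (LVec 4)), t) ({e4} : Finset (LVec 4)) =
    ({e4, e5} : Finset (LVec 4)) from by decide] at h
  exact h

theorem coneX_e2345 :
    coneGen (toQ '' (({e2, e3, e4, e5} : Finset (LVec 4)) : Set (LVec 4))) ∈ SigmaX := by
  have h := mem_starSubdiv_new (F := SigmaP4) (T := {e1, e2, e3}) (A := {e2, e3, e4})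
    (by
      intro a ha
      rw [Finset.mem_coe] at ha
      fin_cases ha
      · exact mem_gens prim_e2 rayP4_e2
      · exact mem_gens prim_e3 rayP4_e3
      · exact mem_gens prim_e4 rayP4_e4)
    (P4_mem (S := {e1, e2, e3, e4}) (by decide)) (coneGen_finset_mono (by decide))
    (isFaceOf_coneGen {e2, e3, e4} {e1, e2, e3, e4} (dotL ![1, 0, 0, 0]) (by decide)
      (by
        intro s hs
        fin_cases hs <;> norm_num [dotL_apply, Fin.sum_univ_four, Matrix.cons_val_two, Matrix.cons_val_three])
      (by
        intro s hs hns
        fin_cases hs <;> simp_all <;> norm_num [dotL_apply, Fin.sum_univ_four, Matrix.cons_val_two, Matrix.cons_val_three]))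
    (not_subset_of_gen_not_mem (by decide) R_e1_234)
  rw [show insert (∑ t ∈ ({e1, e2, e3} : Finset (LVec 4)), t) ({e2, e3, e4} : Finset (LVec 4)) =
    ({e2, e3, e4, e5} : Finset (LVec 4)) from by decide] at h
  exact h

/-! ### The fan `Σ_W` -/

theorem rayW_e0 : coneGen {toQ e0} ∈ SigmaW :=
  mem_starSubdiv_old rayX_e0 (not_subset_ray (by decide) prim_e2 prim_e0 (by decide))
theorem rayW_e1 : coneGen {toQ e1} ∈ SigmaW :=
  mem_starSubdiv_old rayX_e1 (not_subset_ray (by decide) prim_e2 prim_e1 (by decide))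
theorem rayW_e2 : coneGen {toQ e2} ∈ SigmaW :=
  mem_starSubdiv_old rayX_e2 (not_subset_ray (by decide) prim_e3 prim_e2 (by decide))
theorem rayW_e3 : coneGen {toQ e3} ∈ SigmaW :=
  mem_starSubdiv_old rayX_e3 (not_subset_ray (by decide) prim_e2 prim_e3 (by decide))
theorem rayW_e4 : coneGen {toQ e4} ∈ SigmaW :=
  mem_starSubdiv_old rayX_e4 (not_subset_ray (by decide) prim_e2 prim_e4 (by decide))
theorem rayW_e5 : coneGen {toQ e5} ∈ SigmaW :=
  mem_starSubdiv_old rayX_e5 (not_subset_ray (by decide) prim_e2 prim_e5 (by decide))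

theorem rayW_e6 : coneGen {toQ e6} ∈ SigmaW := by
  have h := mem_starSubdiv_new (F := SigmaX) (T := {e2, e3, e4}) (A := ∅)
    (by simp) coneX_e234 subset_rfl
    (isFaceOf_coneGen ∅ {e2, e3, e4} (dotL ![0, 1, 1, 1]) (Finset.empty_subset _)
      (fun s hs => absurd hs (Finset.notMem_empty s))
      (by
        intro s hs _
        fin_cases hs <;> norm_num [dotL_apply, Fin.sum_univ_four, Matrix.cons_val_two, Matrix.cons_val_three]))
    (not_subset_empty (s := e2) (by decide) (by decide))
  rw [show insert (∑ t ∈ ({e2, e3, e4} : Finset (LVec 4)), t) ∅ = ({e6} : Finset (LVec 4))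
    from by decide] at h
  rwa [coneGen_coe_singleton] at h

theorem coneW_e45 : coneGen (toQ '' (({e4, e5} : Finset (LVec 4)) : Set (LVec 4))) ∈ SigmaW :=
  mem_starSubdiv_old coneX_e45 (not_subset_of_gen_not_mem (by decide) R_e2_45)

theorem coneW_e2456 :
    coneGen (toQ '' (({e2, e4, e5, e6} : Finset (LVec 4)) : Set (LVec 4))) ∈ SigmaW := by
  have h := mem_starSubdiv_new (F := SigmaX) (T := {e2, e3, e4}) (A := {e2, e4, e5})
    (by
      intro a ha
      rw [Finset.mem_coe] at ha
      fin_cases ha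
      · exact mem_gens prim_e2 rayX_e2
      · exact mem_gens prim_e4 rayX_e4
      · exact mem_gens prim_e5 rayX_e5)
    coneX_e2345 (coneGen_finset_mono (by decide))
    (isFaceOf_coneGen {e2, e4, e5} {e2, e3, e4, e5} (dotL ![-1, 0, 1, 0]) (by decide)
      (by
        intro s hs
        fin_cases hs <;> norm_num [dotL_apply, Fin.sum_univ_four, Matrix.cons_val_two, Matrix.cons_val_three])
      (by
        intro s hs hns
        fin_cases hs <;> simp_all <;> norm_num [dotL_apply, Fin.sum_univ_four, Matrix.cons_val_two, Matrix.cons_val_three]))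
    (not_subset_of_gen_not_mem (by decide) R_e3_245)
  rw [show insert (∑ t ∈ ({e2, e3, e4} : Finset (LVec 4)), t) ({e2, e4, e5} : Finset (LVec 4)) =
    ({e2, e4, e5, e6} : Finset (LVec 4)) from by decide] at h
  exact h

theorem coneW_e3456 :
    coneGen (toQ '' (({e3, e4, e5, e6} : Finset (LVec 4)) : Set (LVec 4))) ∈ SigmaW := by
  have h := mem_starSubdiv_new (F := SigmaX) (T := {e2, e3, e4}) (A := {e3, e4, e5})
    (by
      intro a ha
      rw [Finset.mem_coe] at ha
      fin_cases ha
      · exact mem_gens prim_e3 rayX_e3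
      · exact mem_gens prim_e4 rayX_e4
      · exact mem_gens prim_e5 rayX_e5)
    coneX_e2345 (coneGen_finset_mono (by decide))
    (isFaceOf_coneGen {e3, e4, e5} {e2, e3, e4, e5} (dotL ![-1, 1, 0, 0]) (by decide)
      (by
        intro s hs
        fin_cases hs <;> norm_num [dotL_apply, Fin.sum_univ_four, Matrix.cons_val_two, Matrix.cons_val_three])
      (by
        intro s hs hns
        fin_cases hs <;> simp_all <;> norm_num [dotL_apply, Fin.sum_univ_four, Matrix.cons_val_two, Matrix.cons_val_three]))
    (not_subset_of_gen_not_mem (by decide) R_e2_345)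
  rw [show insert (∑ t ∈ ({e2, e3, e4} : Finset (LVec 4)), t) ({e3, e4, e5} : Finset (LVec 4)) =
    ({e3, e4, e5, e6} : Finset (LVec 4)) from by decide] at h
  exact h

/-! ### The fan `Σ_Y` -/

theorem rayY_e0 : coneGen {toQ e0} ∈ SigmaY :=
  mem_starSubdiv_old rayW_e0 (not_subset_ray (by decide) prim_e4 prim_e0 (by decide))
theorem rayY_e1 : coneGen {toQ e1} ∈ SigmaY :=
  mem_starSubdiv_old rayW_e1 (not_subset_ray (by decide) prim_e4 prim_e1 (by decide))
theorem rayY_e2 : coneGen {toQ e2} ∈ SigmaY :=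
  mem_starSubdiv_old rayW_e2 (not_subset_ray (by decide) prim_e4 prim_e2 (by decide))
theorem rayY_e3 : coneGen {toQ e3} ∈ SigmaY :=
  mem_starSubdiv_old rayW_e3 (not_subset_ray (by decide) prim_e4 prim_e3 (by decide))
theorem rayY_e4 : coneGen {toQ e4} ∈ SigmaY :=
  mem_starSubdiv_old rayW_e4 (not_subset_ray (by decide) prim_e5 prim_e4 (by decide))
theorem rayY_e5 : coneGen {toQ e5} ∈ SigmaY :=
  mem_starSubdiv_old rayW_e5 (not_subset_ray (by decide) prim_e4 prim_e5 (by decide))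
theorem rayY_e6 : coneGen {toQ e6} ∈ SigmaY :=
  mem_starSubdiv_old rayW_e6 (not_subset_ray (by decide) prim_e4 prim_e6 (by decide))

theorem rayY_e7 : coneGen {toQ e7} ∈ SigmaY := by
  have h := mem_starSubdiv_new (F := SigmaW) (T := {e4, e5}) (A := ∅)
    (by simp) coneW_e45 subset_rfl
    (isFaceOf_coneGen ∅ {e4, e5} (dotL ![1, 0, 0, 1]) (Finset.empty_subset _)
      (fun s hs => absurd hs (Finset.notMem_empty s))
      (by
        intro s hs _
        fin_cases hs <;> norm_num [dotL_apply, Fin.sum_univ_four, Matrix.cons_val_two, Matrix.cons_val_three]))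
    (not_subset_empty (s := e4) (by decide) (by decide))
  rw [show insert (∑ t ∈ ({e4, e5} : Finset (LVec 4)), t) ∅ = ({e7} : Finset (LVec 4))
    from by decide] at h
  rwa [coneGen_coe_singleton] at h

theorem coneY_C2 :
    coneGen (toQ '' (({e2, e5, e6, e7} : Finset (LVec 4)) : Set (LVec 4))) ∈ SigmaY := by
  have h := mem_starSubdiv_new (F := SigmaW) (T := {e4, e5}) (A := {e2, e5, e6})
    (by
      intro a ha
      rw [Finset.mem_coe] at ha
      fin_cases ha
      · exact mem_gens prim_e2 rayW_e2
      · exact mem_gens prim_e5 rayW_e5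
      · exact mem_gens prim_e6 rayW_e6)
    coneW_e2456 (coneGen_finset_mono (by decide))
    (isFaceOf_coneGen {e2, e5, e6} {e2, e4, e5, e6} (dotL ![1, 0, -1, 1]) (by decide)
      (by
        intro s hs
        fin_cases hs <;> norm_num [dotL_apply, Fin.sum_univ_four, Matrix.cons_val_two, Matrix.cons_val_three])
      (by
        intro s hs hns
        fin_cases hs <;> simp_all <;> norm_num [dotL_apply, Fin.sum_univ_four, Matrix.cons_val_two, Matrix.cons_val_three]))
    (not_subset_of_gen_not_mem (by decide) R_e4_256)
  rw [show insert (∑ t ∈ ({e4, e5} : Finset (LVec 4)), t) ({e2, e5, e6} : Finset (LVec 4)) =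
    ({e2, e5, e6, e7} : Finset (LVec 4)) from by decide] at h
  exact h

theorem coneY_C2' :
    coneGen (toQ '' (({e3, e5, e6, e7} : Finset (LVec 4)) : Set (LVec 4))) ∈ SigmaY := by
  have h := mem_starSubdiv_new (F := SigmaW) (T := {e4, e5}) (A := {e3, e5, e6})
    (by
      intro a ha
      rw [Finset.mem_coe] at ha
      fin_cases ha
      · exact mem_gens prim_e3 rayW_e3
      · exact mem_gens prim_e5 rayW_e5
      · exact mem_gens prim_e6 rayW_e6)
    coneW_e3456 (coneGen_finset_mono (by decide))
    (isFaceOf_coneGen {e3, e5, e6} {e3, e4, e5, e6} (dotL ![1, -1, 0, 1]) (by decide)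
      (by
        intro s hs
        fin_cases hs <;> norm_num [dotL_apply, Fin.sum_univ_four, Matrix.cons_val_two, Matrix.cons_val_three])
      (by
        intro s hs hns
        fin_cases hs <;> simp_all <;> norm_num [dotL_apply, Fin.sum_univ_four, Matrix.cons_val_two, Matrix.cons_val_three]))
    (not_subset_of_gen_not_mem (by decide) R_e4_356)
  rw [show insert (∑ t ∈ ({e4, e5} : Finset (LVec 4)), t) ({e3, e5, e6} : Finset (LVec 4)) =
    ({e3, e5, e6, e7} : Finset (LVec 4)) from by decide] at h
  exact h
/-! ### Classification of rays of `Σ_Y` -/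

def G8fin : Finset (LVec 4) := {e0, e1, e2, e3, e4, e5, e6, e7}

theorem ray_eq_coneGen_cases {v : LVec 4} {S : Finset (LVec 4)} (hv : IsPrimitive v)
    (hS : ∀ s ∈ S, IsPrimitive s)
    (h : coneGen {toQ v} = coneGen (toQ '' (S : Set (LVec 4)))) : v ∈ S := by
  rcases S.eq_empty_or_nonempty with rfl | ⟨s₀, hs₀⟩
  · exfalso
    have hvm : toQ v ∈ coneGen {toQ v} :=
      mem_coneGen_singleton.mpr ⟨1, zero_le_one, (one_smul _ _).symm⟩
    rw [h, coneGen_empty] at hvm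
    exact hv.1 (toQ_eq_zero hvm)
  · have hm : toQ s₀ ∈ coneGen {toQ v} := by
      rw [h]; exact mem_coneGen_gen hs₀
    rw [mem_coneGen_singleton] at hm
    obtain ⟨c, hc, hcs⟩ := hm
    have := eq_of_parallel (hS s₀ hs₀) hv hc hcs
    rwa [this] at hs₀

theorem gens_P4 {v : LVec 4} (hv : IsPrimitive v) (h : coneGen {toQ v} ∈ SigmaP4) :
    v ∈ ({e0, e1, e2, e3, e4} : Finset (LVec 4)) := by
  obtain ⟨S, hS, heq⟩ := h
  have hprim : ∀ s ∈ S, IsPrimitive s := by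
    intro s hs
    have hmem := hS.1 hs
    fin_cases hmem
    exacts [prim_e0, prim_e1, prim_e2, prim_e3, prim_e4]
  exact hS.1 (ray_eq_coneGen_cases hv hprim heq)

theorem gens_X {v : LVec 4} (hv : IsPrimitive v) (h : coneGen {toQ v} ∈ SigmaX) :
    v ∈ ({e0, e1, e2, e3, e4, e5} : Finset (LVec 4)) := by
  rcases h with ⟨h1, -⟩ | ⟨A, hA, -, -, heq⟩
  · exact Finset.mem_of_subset (by decide) (gens_P4 hv h1)
  · rw [show (∑ t ∈ ({e1, e2, e3} : Finset (LVec 4)), t) = e5 from by decide] at heq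
    have hprim : ∀ s ∈ insert e5 A, IsPrimitive s := by
      intro s hs
      rcases Finset.mem_insert.mp hs with rfl | hsA
      · exact prim_e5
      · exact (hA hsA).1
    have hvmem := ray_eq_coneGen_cases hv hprim heq
    rcases Finset.mem_insert.mp hvmem with rfl | hvA
    · decide
    · exact Finset.mem_of_subset (by decide) (gens_P4 hv (hA hvA).2)

theorem gens_W {v : LVec 4} (hv : IsPrimitive v) (h : coneGen {toQ v} ∈ SigmaW) :
    v ∈ ({e0, e1, e2, e3, e4, e5, e6} : Finset (LVec 4)) := by
  rcases h with ⟨h1, -⟩ | ⟨A, hA, -, -, heq⟩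
  · exact Finset.mem_of_subset (by decide) (gens_X hv h1)
  · rw [show (∑ t ∈ ({e2, e3, e4} : Finset (LVec 4)), t) = e6 from by decide] at heq
    have hprim : ∀ s ∈ insert e6 A, IsPrimitive s := by
      intro s hs
      rcases Finset.mem_insert.mp hs with rfl | hsA
      · exact prim_e6
      · exact (hA hsA).1
    have hvmem := ray_eq_coneGen_cases hv hprim heq
    rcases Finset.mem_insert.mp hvmem with rfl | hvA
    · decide
    · exact Finset.mem_of_subset (by decide) (gens_X hv (hA hvA).2)

theorem gens_Y {v : LVec 4} (hv : IsPrimitive v) (h : coneGen {toQ v} ∈ SigmaY) :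
    v ∈ G8fin := by
  rcases h with ⟨h1, -⟩ | ⟨A, hA, -, -, heq⟩
  · exact Finset.mem_of_subset (by decide) (gens_W hv h1)
  · rw [show (∑ t ∈ ({e4, e5} : Finset (LVec 4)), t) = e7 from by decide] at heq
    have hprim : ∀ s ∈ insert e7 A, IsPrimitive s := by
      intro s hs
      rcases Finset.mem_insert.mp hs with rfl | hsA
      · exact prim_e7
      · exact (hA hsA).1
    have hvmem := ray_eq_coneGen_cases hv hprim heq
    rcases Finset.mem_insert.mp hvmem with rfl | hvA
    · decide
    · exact Finset.mem_of_subset (by decide) (gens_W hv (hA hvA).2)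

/-! ### Enumeration of possible blow-up centers -/

set_option maxHeartbeats 4000000 in
set_option maxRecDepth 1000000 in
theorem enumT : ∀ T ∈ G8fin.powerset,
    2 ≤ T.card → (∑ t ∈ T, t) ∈ G8fin → (∑ t ∈ T, t) ∉ T →
    (∀ S ∈ T.powerset, S ≠ ∅ → ∑ t ∈ S, t ≠ (0 : LVec 4)) →
    T = {e1, e2, e3} ∨ T = {e2, e3, e4} ∨ T = {e4, e5} ∨ T = {e1, e6} ∨
      T = {e1, e2, e3, e4} := by
  decide
/-! ### Fano contradiction for a two-element primitive collection -/

theorem fano_contradiction {F : Set (Set (Vec 4))} (hFan : IsSmoothCompleteFan F)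
    (hFano : IsFano F) {p q : LVec 4} {Y : Finset (LVec 4)} (a : LVec 4 → ℤ)
    (hpq : p ≠ q) (hpg : p ∈ gens F) (hqg : q ∈ gens F)
    (hYg : (Y : Set (LVec 4)) ⊆ gens F)
    (hYF : coneGen (toQ '' (Y : Set (LVec 4))) ∈ F)
    (hapos : ∀ y ∈ Y, 0 < a y)
    (hsum : p + q = ∑ y ∈ Y, a y • y)
    (hdeg : ¬ (0 < (2 : ℤ) - ∑ y ∈ Y, a y))
    (hwit : ∃ w ∈ Y, toQ w ∉ coneGen (toQ '' (({p, q} : Finset (LVec 4)) : Set (LVec 4)))) :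
    False := by
  have hzeq : toQ p + toQ q = ∑ y ∈ Y, (a y : ℚ) • toQ y := by
    have h := congrArg toQ hsum
    have h1 : toQ (p + q) = toQ p + toQ q := by funext i; simp [toQ]
    have h2 : ∀ y ∈ Y, toQ (a y • y) = (a y : ℚ) • toQ y := by
      intro y _
      funext i
      simp [toQ]
    rw [h1, toQ_sum_f] at h
    rw [h, Finset.sum_congr rfl h2]
  by_cases hPF : coneGen (toQ '' (({p, q} : Finset (LVec 4)) : Set (LVec 4))) ∈ F
  · -- the intersection of the two cones is not a face of `coneGen Y`
    obtain ⟨w, hwY, hwnot⟩ := hwit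
    obtain ⟨hface, -⟩ := hFan.inter _ hYF _ hPF
    obtain ⟨u, hu0, hset⟩ := hface
    have hzP : toQ p + toQ q ∈ coneGen (toQ '' (({p, q} : Finset (LVec 4)) : Set (LVec 4))) :=
      add_mem_coneGen (mem_coneGen_gen (by simp)) (mem_coneGen_gen (by simp [Finset.mem_insert]))
    have hzY : toQ p + toQ q ∈ coneGen (toQ '' (Y : Set (LVec 4))) := by
      rw [mem_coneGen_iff]
      refine ⟨fun y => if y ∈ Y then (a y : ℚ) else 0, ?_, ?_⟩
      · intro s
        dsimp only
        split
        · next h => exact le_of_lt (by exact_mod_cast hapos s h)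
        · exact le_refl 0
      · rw [hzeq]
        exact Finset.sum_congr rfl fun y hy => by simp [hy]
    have hzmem : toQ p + toQ q ∈ coneGen (toQ '' (Y : Set (LVec 4))) ∩
        coneGen (toQ '' (({p, q} : Finset (LVec 4)) : Set (LVec 4))) := ⟨hzY, hzP⟩
    have huz : u (toQ p + toQ q) = 0 := by
      rw [hset] at hzmem
      exact hzmem.2
    have hsumu : ∑ y ∈ Y, (a y : ℚ) * u (toQ y) = 0 := by
      rw [← huz, hzeq, map_sum]
      exact Finset.sum_congr rfl fun y _ => by rw [map_smul, smul_eq_mul]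
    have hallu : ∀ y ∈ Y, (a y : ℚ) * u (toQ y) = 0 :=
      (Finset.sum_eq_zero_iff_of_nonneg fun y hy =>
        mul_nonneg (by exact_mod_cast (hapos y hy).le) (hu0 _ (mem_coneGen_gen hy))).mp hsumu
    have huw : u (toQ w) = 0 := by
      have h := hallu w hwY
      have : (a w : ℚ) ≠ 0 := by exact_mod_cast (hapos w hwY).ne'
      exact (mul_eq_zero.mp h).resolve_left this
    have : toQ w ∈ coneGen (toQ '' (Y : Set (LVec 4))) ∩
        coneGen (toQ '' (({p, q} : Finset (LVec 4)) : Set (LVec 4))) := by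
      rw [hset]
      exact ⟨mem_coneGen_gen hwY, huw⟩
    exact hwnot this.2
  · -- `{p, q}` is a primitive collection of degree ≤ 0
    have hprimcol : IsPrimCol F {p, q} := by
      refine ⟨?_, hPF, ?_⟩
      · intro z hz
        rw [Finset.coe_insert, Finset.coe_singleton] at hz
        rcases hz with rfl | hz
        · exact hpg
        · rw [Set.mem_singleton_iff] at hz
          subst hz
          exact hqg
      · intro z hz
        rcases Finset.mem_insert.mp hz with rfl | hz
        · rw [Finset.erase_insert (by simp [hpq]), coneGen_coe_singleton]
          exact hqg.2
        · rw [Finset.mem_singleton] at hz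
          subst hz
          have herase : ({p, z} : Finset (LVec 4)).erase z = {p} := by
            ext w
            simp only [Finset.mem_erase, Finset.mem_insert, Finset.mem_singleton]
            constructor
            · rintro ⟨hne, h | h⟩
              · exact h
              · exact absurd h hne
            · rintro rfl
              exact ⟨hpq, Or.inl rfl⟩
          rw [herase, coneGen_coe_singleton]
          exact hpg.2
    have hrel : HasPrimRel F {p, q} Y a := ⟨hYg, hYF, hapos, by rw [sum2 _ hpq]; exact hsum⟩
    have hd := hFano _ _ _ hprimcol hrel
    rw [degOf, Finset.card_insert_of_notMem (by simp [hpq]), Finset.card_singleton] at hd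
    exact hdeg (by exact_mod_cast hd)
set_option maxHeartbeats 2000000 in
/-- The toric Fano 4-fold `Y` associated to `Σ_Y` does not admit any equivariant
blow-down to a nonsingular toric Fano 4-fold: there is no smooth complete Fano fan
`Σ'` in `ℤ^4` and cone `τ` of `Σ'` of dimension at least 2 such that `Σ_Y` is the
star subdivision of `Σ'` at `τ`. -/
theorem sigmaY_no_fano_blowdown :
    ¬ ∃ (F : Set (Set (Vec 4))) (T : Finset (LVec 4)),
      IsSmoothCompleteFan F ∧ IsFano F ∧ (↑T : Set (LVec 4)) ⊆ gens F ∧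
      2 ≤ T.card ∧ coneGen (toQ '' ↑T) ∈ F ∧ SigmaY = starSubdiv F T := by
  rintro ⟨F, T, hFan, hFano, hTg, hcard, hconeT, hEq⟩
  obtain ⟨t1, ht1, t2, ht2, hne12⟩ := Finset.one_lt_card.mp hcard
  have hTprim : ∀ t ∈ T, IsPrimitive t := fun t ht => (hTg ht).1
  -- the cone on T is not contained in any ray
  have hNTC : ∀ v : LVec 4, ¬ coneGen (toQ '' ↑T) ⊆ coneGen {toQ v} := by
    intro v hsub
    have h1 := hsub (mem_coneGen_gen ht1)
    have h2 := hsub (mem_coneGen_gen ht2)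
    rw [mem_coneGen_singleton] at h1 h2
    obtain ⟨c1, hc1, hcs1⟩ := h1
    obtain ⟨c2, hc2, hcs2⟩ := h2
    have hc1ne : c1 ≠ 0 := by
      rintro rfl
      exact (hTprim t1 ht1).1 (toQ_eq_zero (by rw [hcs1, zero_smul]))
    have hkey : toQ t2 = (c2 / c1) • toQ t1 := by
      rw [hcs2, hcs1, smul_smul]
      congr 1
      field_simp
    exact hne12 (eq_of_parallel (hTprim t2 ht2) (hTprim t1 ht1)
      (div_nonneg hc2 hc1) hkey).symm
  -- rays of `F` are rays of `Σ_Y`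
  have hrayY : ∀ v ∈ gens F, coneGen {toQ v} ∈ SigmaY := by
    intro v hvF
    rw [hEq]
    exact mem_starSubdiv_old hvF.2 (hNTC v)
  have hTG8 : ∀ t ∈ T, t ∈ G8fin := fun t ht =>
    gens_Y (hTprim t ht) (hrayY t (hTg ht))
  have hTne : T.Nonempty := Finset.card_pos.mp (by omega)
  obtain ⟨hxprim, hsub0⟩ := T_structure hFan hTg hconeT hTne
  -- the sum of T lies in the cone on T
  have hxcone : toQ (∑ t ∈ T, t) ∈ coneGen (toQ '' ↑T) := by
    rw [mem_coneGen_iff]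
    refine ⟨fun _ => 1, fun _ => zero_le_one, ?_⟩
    rw [toQ_sum]
    exact Finset.sum_congr rfl fun _ _ => (one_smul _ _).symm
  -- the ray on the sum of T is a ray of `Σ_Y`
  have hrayxY : coneGen {toQ (∑ t ∈ T, t)} ∈ SigmaY := by
    rw [hEq]
    have h := mem_starSubdiv_new (F := F) (T := T) (A := ∅) (by simp)
      hconeT subset_rfl (face_zero_of_smooth hFan hconeT)
      (not_subset_empty (s := t1) ht1 (hTprim t1 ht1).1)
    rw [show insert (∑ t ∈ T, t) (∅ : Finset (LVec 4)) = {∑ t ∈ T, t} from by simp] at h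
    rwa [coneGen_coe_singleton] at h
  have hxG8 : (∑ t ∈ T, t) ∈ G8fin := gens_Y hxprim hrayxY
  have hxnotT : (∑ t ∈ T, t) ∉ T := by
    intro hxT
    have hsplit := Finset.add_sum_erase T id hxT
    have h0 : ∑ t ∈ T.erase (∑ t ∈ T, t), t = 0 := by
      have : (∑ t ∈ T, t) + ∑ t ∈ T.erase (∑ t ∈ T, t), t = ∑ t ∈ T, t := hsplit
      exact add_left_cancel (by rw [this, add_zero])
    have herane : (T.erase (∑ t ∈ T, t)).Nonempty := by
      rw [← Finset.card_pos, Finset.card_erase_of_mem hxT]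
      omega
    exact hsub0 _ (Finset.erase_subset _ T) herane h0
  -- the ray on the sum of T is not in F
  have hxnotF : coneGen {toQ (∑ t ∈ T, t)} ∉ F := by
    intro hrx
    have hraysub : coneGen {toQ (∑ t ∈ T, t)} ⊆ coneGen (toQ '' ↑T) := by
      intro z hz
      rw [mem_coneGen_singleton] at hz
      obtain ⟨c, hc, rfl⟩ := hz
      exact smul_mem_coneGen hxcone hc
    obtain ⟨hface, -⟩ := hFan.inter _ hconeT _ hrx
    rw [Set.inter_eq_self_of_subset_right hraysub] at hface
    obtain ⟨u, hu0, hset⟩ := hface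
    have hux : u (toQ (∑ t ∈ T, t)) = 0 := by
      have hm : toQ (∑ t ∈ T, t) ∈ coneGen {toQ (∑ t ∈ T, t)} :=
        mem_coneGen_singleton.mpr ⟨1, zero_le_one, (one_smul _ _).symm⟩
      rw [hset] at hm
      exact hm.2
    have hsumu : ∑ t ∈ T, u (toQ t) = 0 := by
      rw [← map_sum, ← toQ_sum]
      exact hux
    have hall : ∀ t ∈ T, u (toQ t) = 0 :=
      (Finset.sum_eq_zero_iff_of_nonneg fun t ht => hu0 _ (mem_coneGen_gen ht)).mp hsumu
    have hm1 : toQ t1 ∈ coneGen {toQ (∑ t ∈ T, t)} := by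
      rw [hset]
      exact ⟨mem_coneGen_gen ht1, hall t1 ht1⟩
    have hm2 : toQ t2 ∈ coneGen {toQ (∑ t ∈ T, t)} := by
      rw [hset]
      exact ⟨mem_coneGen_gen ht2, hall t2 ht2⟩
    rw [mem_coneGen_singleton] at hm1 hm2
    obtain ⟨c1, hc1, hcs1⟩ := hm1
    obtain ⟨c2, hc2, hcs2⟩ := hm2
    exact hne12 ((eq_of_parallel (hTprim t1 ht1) hxprim hc1 hcs1).trans
      (eq_of_parallel (hTprim t2 ht2) hxprim hc2 hcs2).symm)
  -- rays of `Σ_Y` other than the sum of T are rays of F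
  have hgensF : ∀ v : LVec 4, IsPrimitive v → coneGen {toQ v} ∈ SigmaY →
      v ≠ ∑ t ∈ T, t → v ∈ gens F := by
    intro v hv hvY hvx
    rw [hEq] at hvY
    rcases hvY with ⟨h1, -⟩ | ⟨A, hA, -, -, heq⟩
    · exact ⟨hv, h1⟩
    · exfalso
      have hm : toQ (∑ t ∈ T, t) ∈ coneGen {toQ v} := by
        rw [heq]
        exact mem_coneGen_gen (Finset.mem_insert_self _ _)
      rw [mem_coneGen_singleton] at hm
      obtain ⟨c, hc, hcs⟩ := hm
      exact hvx (eq_of_parallel hxprim hv hc hcs).symm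
  have hgens8 : ∀ b ∈ gens F, b ∈ G8fin ∧ b ≠ ∑ t ∈ T, t := by
    intro b hb
    refine ⟨gens_Y hb.1 (hrayY b hb), ?_⟩
    intro hbx
    rw [hbx] at hb
    exact hxnotF hb.2
  -- enumeration of the possible T
  have hcases := enumT T (Finset.mem_powerset.mpr fun t ht => hTG8 t ht) hcard hxG8 hxnotT
    (fun S hS hSne => hsub0 S (Finset.mem_powerset.mp hS)
      (Finset.nonempty_iff_ne_empty.mpr hSne))
  rcases hcases with rfl | rfl | rfl | rfl | rfl
  · -- T = {e1, e2, e3}: structural contradiction using the cone {e2, e5, e6, e7} of Σ_Y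
    have hxval : (∑ t ∈ ({e1, e2, e3} : Finset (LVec 4)), t) = e5 := by decide
    rw [hxval] at hxnotF
    have hC2 := coneY_C2
    by_cases hC2F : coneGen (toQ '' (({e2, e5, e6, e7} : Finset (LVec 4)) : Set (LVec 4))) ∈ F
    · have hface : IsFaceOf (coneGen (toQ '' (({e5} : Finset (LVec 4)) : Set (LVec 4))))
          (coneGen (toQ '' (({e2, e5, e6, e7} : Finset (LVec 4)) : Set (LVec 4)))) :=
        isFaceOf_coneGen {e5} {e2, e5, e6, e7} (dotL ![0, 1, -1, 1]) (by decide)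
          (by intro s hs; fin_cases hs <;> norm_num [dotL_apply, Fin.sum_univ_four, Matrix.cons_val_two, Matrix.cons_val_three])
          (by intro s hs hns; fin_cases hs <;> simp_all <;>
            norm_num [dotL_apply, Fin.sum_univ_four, Matrix.cons_val_two, Matrix.cons_val_three])
      have h5F := hFan.faces _ hC2F _ hface
      rw [coneGen_coe_singleton] at h5F
      exact hxnotF h5F
    · rw [hEq] at hC2
      rcases hC2 with ⟨h1, -⟩ | ⟨A, hA, ⟨σ, hσF, hTσ, hfaceA⟩, -, hC2eq⟩
      · exact hC2F h1
      · rw [hxval] at hC2eq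
        have hAsub : ∀ b ∈ A, b = e2 ∨ b = e6 ∨ b = e7 := by
          intro b hb
          obtain ⟨hbG8, hbx⟩ := hgens8 b (hA hb)
          rw [hxval] at hbx
          have hbC2 : toQ b ∈ coneGen (toQ '' (({e2, e5, e6, e7} : Finset (LVec 4)) :
              Set (LVec 4))) := by
            rw [hC2eq]
            exact mem_coneGen_gen (Finset.mem_insert_of_mem hb)
          rw [G8fin] at hbG8
          simp only [Finset.mem_insert, Finset.mem_singleton] at hbG8
          rcases hbG8 with rfl | rfl | rfl | rfl | rfl | rfl | rfl | rfl
          · exact absurd hbC2 R_e0_C2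
          · exact absurd hbC2 R_e1_C2
          · exact Or.inl rfl
          · exact absurd hbC2 R_e3_C2
          · exact absurd hbC2 R_e4_C2
          · exact absurd rfl hbx
          · exact Or.inr (Or.inl rfl)
          · exact Or.inr (Or.inr rfl)
        have h6A : e6 ∈ A := by
          by_contra h6
          have hsub : (insert e5 A : Finset (LVec 4)) ⊆ {e2, e5, e7} := by
            intro b hb
            rcases Finset.mem_insert.mp hb with rfl | hbA
            · decide
            · rcases hAsub b hbA with rfl | rfl | rfl
              · decide
              · exact absurd hbA h6
              · decide
          have hm : toQ e6 ∈ coneGen (toQ '' (({e2, e5, e7} : Finset (LVec 4)) :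
              Set (LVec 4))) := by
            have hm0 : toQ e6 ∈ coneGen (toQ '' (({e2, e5, e6, e7} : Finset (LVec 4)) :
                Set (LVec 4))) := mem_coneGen_gen (by decide)
            rw [hC2eq] at hm0
            exact coneGen_finset_mono hsub hm0
          exact R_e6_257 hm
        have h7A : e7 ∈ A := by
          by_contra h7
          have hsub : (insert e5 A : Finset (LVec 4)) ⊆ {e2, e5, e6} := by
            intro b hb
            rcases Finset.mem_insert.mp hb with rfl | hbA
            · decide
            · rcases hAsub b hbA with rfl | rfl | rfl
              · decide
              · decide
              · exact absurd hbA h7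
          have hm : toQ e7 ∈ coneGen (toQ '' (({e2, e5, e6} : Finset (LVec 4)) :
              Set (LVec 4))) := by
            have hm0 : toQ e7 ∈ coneGen (toQ '' (({e2, e5, e6, e7} : Finset (LVec 4)) :
                Set (LVec 4))) := mem_coneGen_gen (by decide)
            rw [hC2eq] at hm0
            exact coneGen_finset_mono hsub hm0
          exact R_e7_256 hm
        have hsubσ : coneGen (toQ '' (A : Set (LVec 4))) ⊆ σ := by
          obtain ⟨u, hu0, hset⟩ := hfaceA
          rw [hset]
          exact fun z hz => hz.1
        obtain ⟨b, I, hrep⟩ := hFan.smooth σ hσF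
        rw [show (⇑b '' ↑I : Set (LVec 4)) = ((I.image ⇑b : Finset (LVec 4)) : Set (LVec 4))
          from by rw [Finset.coe_image]] at hrep
        have hg1 : e1 ∈ gens F := hTg (by decide)
        have hg2 : e2 ∈ gens F := hTg (by decide)
        have hg3 : e3 ∈ gens F := hTg (by decide)
        have hg6 : e6 ∈ gens F := hgensF e6 prim_e6 rayY_e6 (by rw [hxval]; decide)
        have hg7 : e7 ∈ gens F := hgensF e7 prim_e7 rayY_e7 (by rw [hxval]; decide)
        obtain ⟨i1, hi1, hb1⟩ := gen_mem_basis_image hFan hσF b I hrep hg1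
          (hTσ (mem_coneGen_gen (by decide)))
        obtain ⟨i2, hi2, hb2⟩ := gen_mem_basis_image hFan hσF b I hrep hg2
          (hTσ (mem_coneGen_gen (by decide)))
        obtain ⟨i3, hi3, hb3⟩ := gen_mem_basis_image hFan hσF b I hrep hg3
          (hTσ (mem_coneGen_gen (by decide)))
        obtain ⟨i6, hi6, hb6⟩ := gen_mem_basis_image hFan hσF b I hrep hg6
          (hsubσ (mem_coneGen_gen h6A))
        obtain ⟨i7, hi7, hb7⟩ := gen_mem_basis_image hFan hσF b I hrep hg7
          (hsubσ (mem_coneGen_gen h7A))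
        have hne : ∀ {i j : Fin 4} {v w : LVec 4}, b i = v → b j = w → v ≠ w → i ≠ j :=
          fun hbu hbv huv h => huv (by rw [← hbu, ← hbv, h])
        have hdist : ∀ (a₁ a₂ a₃ a₄ a₅ : Fin 4), a₁ = a₂ ∨ a₁ = a₃ ∨ a₁ = a₄ ∨ a₁ = a₅ ∨
            a₂ = a₃ ∨ a₂ = a₄ ∨ a₂ = a₅ ∨ a₃ = a₄ ∨ a₃ = a₅ ∨ a₄ = a₅ := by decide
        rcases hdist i1 i2 i3 i6 i7 with h | h | h | h | h | h | h | h | h | h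
        · exact hne hb1 hb2 (by decide) h
        · exact hne hb1 hb3 (by decide) h
        · exact hne hb1 hb6 (by decide) h
        · exact hne hb1 hb7 (by decide) h
        · exact hne hb2 hb3 (by decide) h
        · exact hne hb2 hb6 (by decide) h
        · exact hne hb2 hb7 (by decide) h
        · exact hne hb3 hb6 (by decide) h
        · exact hne hb3 hb7 (by decide) h
        · exact hne hb6 hb7 (by decide) h
  · -- T = {e2, e3, e4}: structural contradiction using the cone {e3, e5, e6, e7} of Σ_Y
    have hxval : (∑ t ∈ ({e2, e3, e4} : Finset (LVec 4)), t) = e6 := by decide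
    rw [hxval] at hxnotF
    have hC2 := coneY_C2'
    by_cases hC2F : coneGen (toQ '' (({e3, e5, e6, e7} : Finset (LVec 4)) : Set (LVec 4))) ∈ F
    · have hface : IsFaceOf (coneGen (toQ '' (({e6} : Finset (LVec 4)) : Set (LVec 4))))
          (coneGen (toQ '' (({e3, e5, e6, e7} : Finset (LVec 4)) : Set (LVec 4)))) :=
        isFaceOf_coneGen {e6} {e3, e5, e6, e7} (dotL ![1, -1, 1, 0]) (by decide)
          (by intro s hs; fin_cases hs <;> norm_num [dotL_apply, Fin.sum_univ_four, Matrix.cons_val_two, Matrix.cons_val_three])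
          (by intro s hs hns; fin_cases hs <;> simp_all <;>
            norm_num [dotL_apply, Fin.sum_univ_four, Matrix.cons_val_two, Matrix.cons_val_three])
      have h6F := hFan.faces _ hC2F _ hface
      rw [coneGen_coe_singleton] at h6F
      exact hxnotF h6F
    · rw [hEq] at hC2
      rcases hC2 with ⟨h1, -⟩ | ⟨A, hA, ⟨σ, hσF, hTσ, hfaceA⟩, -, hC2eq⟩
      · exact hC2F h1
      · rw [hxval] at hC2eq
        have hAsub : ∀ b ∈ A, b = e3 ∨ b = e5 ∨ b = e7 := by
          intro b hb
          obtain ⟨hbG8, hbx⟩ := hgens8 b (hA hb)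
          rw [hxval] at hbx
          have hbC2 : toQ b ∈ coneGen (toQ '' (({e3, e5, e6, e7} : Finset (LVec 4)) :
              Set (LVec 4))) := by
            rw [hC2eq]
            exact mem_coneGen_gen (Finset.mem_insert_of_mem hb)
          rw [G8fin] at hbG8
          simp only [Finset.mem_insert, Finset.mem_singleton] at hbG8
          rcases hbG8 with rfl | rfl | rfl | rfl | rfl | rfl | rfl | rfl
          · exact absurd hbC2 R_e0_C2p
          · exact absurd hbC2 R_e1_C2p
          · exact absurd hbC2 R_e2_C2p
          · exact Or.inl rfl
          · exact absurd hbC2 R_e4_C2p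
          · exact Or.inr (Or.inl rfl)
          · exact absurd rfl hbx
          · exact Or.inr (Or.inr rfl)
        have h5A : e5 ∈ A := by
          by_contra h5
          have hsub : (insert e6 A : Finset (LVec 4)) ⊆ {e3, e6, e7} := by
            intro b hb
            rcases Finset.mem_insert.mp hb with rfl | hbA
            · decide
            · rcases hAsub b hbA with rfl | rfl | rfl
              · decide
              · exact absurd hbA h5
              · decide
          have hm : toQ e5 ∈ coneGen (toQ '' (({e3, e6, e7} : Finset (LVec 4)) :
              Set (LVec 4))) := by
            have hm0 : toQ e5 ∈ coneGen (toQ '' (({e3, e5, e6, e7} : Finset (LVec 4)) :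
                Set (LVec 4))) := mem_coneGen_gen (by decide)
            rw [hC2eq] at hm0
            exact coneGen_finset_mono hsub hm0
          exact R_e5_367 hm
        have h7A : e7 ∈ A := by
          by_contra h7
          have hsub : (insert e6 A : Finset (LVec 4)) ⊆ {e3, e5, e6} := by
            intro b hb
            rcases Finset.mem_insert.mp hb with rfl | hbA
            · decide
            · rcases hAsub b hbA with rfl | rfl | rfl
              · decide
              · decide
              · exact absurd hbA h7
          have hm : toQ e7 ∈ coneGen (toQ '' (({e3, e5, e6} : Finset (LVec 4)) :
              Set (LVec 4))) := by
            have hm0 : toQ e7 ∈ coneGen (toQ '' (({e3, e5, e6, e7} : Finset (LVec 4)) :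
                Set (LVec 4))) := mem_coneGen_gen (by decide)
            rw [hC2eq] at hm0
            exact coneGen_finset_mono hsub hm0
          exact R_e7_356 hm
        have hsubσ : coneGen (toQ '' (A : Set (LVec 4))) ⊆ σ := by
          obtain ⟨u, hu0, hset⟩ := hfaceA
          rw [hset]
          exact fun z hz => hz.1
        obtain ⟨b, I, hrep⟩ := hFan.smooth σ hσF
        rw [show (⇑b '' ↑I : Set (LVec 4)) = ((I.image ⇑b : Finset (LVec 4)) : Set (LVec 4))
          from by rw [Finset.coe_image]] at hrep
        have hg2 : e2 ∈ gens F := hTg (by decide)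
        have hg3 : e3 ∈ gens F := hTg (by decide)
        have hg4 : e4 ∈ gens F := hTg (by decide)
        have hg5 : e5 ∈ gens F := hgensF e5 prim_e5 rayY_e5 (by rw [hxval]; decide)
        have hg7 : e7 ∈ gens F := hgensF e7 prim_e7 rayY_e7 (by rw [hxval]; decide)
        obtain ⟨i2, hi2, hb2⟩ := gen_mem_basis_image hFan hσF b I hrep hg2
          (hTσ (mem_coneGen_gen (by decide)))
        obtain ⟨i3, hi3, hb3⟩ := gen_mem_basis_image hFan hσF b I hrep hg3
          (hTσ (mem_coneGen_gen (by decide)))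
        obtain ⟨i4, hi4, hb4⟩ := gen_mem_basis_image hFan hσF b I hrep hg4
          (hTσ (mem_coneGen_gen (by decide)))
        obtain ⟨i5, hi5, hb5⟩ := gen_mem_basis_image hFan hσF b I hrep hg5
          (hsubσ (mem_coneGen_gen h5A))
        obtain ⟨i7, hi7, hb7⟩ := gen_mem_basis_image hFan hσF b I hrep hg7
          (hsubσ (mem_coneGen_gen h7A))
        have hne : ∀ {i j : Fin 4} {v w : LVec 4}, b i = v → b j = w → v ≠ w → i ≠ j :=
          fun hbu hbv huv h => huv (by rw [← hbu, ← hbv, h])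
        have hdist : ∀ (a₁ a₂ a₃ a₄ a₅ : Fin 4), a₁ = a₂ ∨ a₁ = a₃ ∨ a₁ = a₄ ∨ a₁ = a₅ ∨
            a₂ = a₃ ∨ a₂ = a₄ ∨ a₂ = a₅ ∨ a₃ = a₄ ∨ a₃ = a₅ ∨ a₄ = a₅ := by decide
        rcases hdist i2 i3 i4 i5 i7 with h | h | h | h | h | h | h | h | h | h
        · exact hne hb2 hb3 (by decide) h
        · exact hne hb2 hb4 (by decide) h
        · exact hne hb2 hb5 (by decide) h
        · exact hne hb2 hb7 (by decide) h
        · exact hne hb3 hb4 (by decide) h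
        · exact hne hb3 hb5 (by decide) h
        · exact hne hb3 hb7 (by decide) h
        · exact hne hb4 hb5 (by decide) h
        · exact hne hb4 hb7 (by decide) h
        · exact hne hb5 hb7 (by decide) h
  · -- T = {e4, e5}: Fano contradiction with P = {e1, e6}
    have hxval : (∑ t ∈ ({e4, e5} : Finset (LVec 4)), t) = e7 := by decide
    refine fano_contradiction hFan hFano (Y := {e4, e5}) (fun _ => 1) (by decide)
      (hgensF e1 prim_e1 rayY_e1 (by rw [hxval]; decide))
      (hgensF e6 prim_e6 rayY_e6 (by rw [hxval]; decide))
      hTg hconeT (fun y _ => one_pos)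
      (by rw [sum2 _ (by decide : e4 ≠ e5)]; simp only [one_smul]; decide)
      (by rw [sum2 _ (by decide : e4 ≠ e5)]; norm_num) ⟨e4, by decide, R_e4_16⟩
  · -- T = {e1, e6}: Fano contradiction with P = {e4, e5}
    have hxval : (∑ t ∈ ({e1, e6} : Finset (LVec 4)), t) = e7 := by decide
    refine fano_contradiction hFan hFano (Y := {e1, e6}) (fun _ => 1) (by decide)
      (hgensF e4 prim_e4 rayY_e4 (by rw [hxval]; decide))
      (hgensF e5 prim_e5 rayY_e5 (by rw [hxval]; decide))
      hTg hconeT (fun y _ => one_pos)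
      (by rw [sum2 _ (by decide : e1 ≠ e6)]; simp only [one_smul]; decide)
      (by rw [sum2 _ (by decide : e1 ≠ e6)]; norm_num) ⟨e1, by decide, R_e1_45⟩
  · -- T = {e1, e2, e3, e4}: Fano contradiction with P = {e4, e5}
    have hxval : (∑ t ∈ ({e1, e2, e3, e4} : Finset (LVec 4)), t) = e7 := by decide
    refine fano_contradiction hFan hFano (Y := {e1, e2, e3, e4}) (fun _ => 1) (by decide)
      (hgensF e4 prim_e4 rayY_e4 (by rw [hxval]; decide))
      (hgensF e5 prim_e5 rayY_e5 (by rw [hxval]; decide))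
      hTg hconeT (fun y _ => one_pos)
      (by rw [sum4 _ (by decide) (by decide) (by decide) (by decide) (by decide) (by decide)]
          simp only [one_smul]; decide)
      (by rw [sum4 _ (by decide) (by decide) (by decide) (by decide) (by decide) (by decide)]
          norm_num) ⟨e1, by decide, R_e1_45⟩
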